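/- An ABB̄L̄-formula φ is satisfied by some finite interval structure if and only if the formula ξ = φ ∨ ⟨B̄⟩φ ∨ ⟨A⟩φ ∨ ⟨A⟩⟨A⟩φ is featured at the initial point (0,1) of some finite compass ξ-structure of size N ≤ (8|φ| + 15)^(2^(32|φ|+56)) · 2^(32|φ|+56), where |φ| denotes the number of subformulas of φ. -/

import Mathlib

namespace ABBL

/-- Formulas of the interval temporal logic ABB̄L̄, built from propositional
variables (of type `P`) using negation, disjunction and the unary modal
operators ⟨A⟩, ⟨B⟩, ⟨B̄⟩, ⟨L̄⟩. -/
inductive Formula (P : Type) : Type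
  | atom  : P → Formula P
  | neg   : Formula P → Formula P
  | or    : Formula P → Formula P → Formula P
  | diaA  : Formula P → Formula P
  | diaB  : Formula P → Formula P
  | diaBb : Formula P → Formula P
  | diaLb : Formula P → Formula P

variable {P : Type}

/-- The set of subformulas of a formula. -/
def subf : Formula P → Set (Formula P)
  | .atom a   => {Formula.atom a}
  | .neg ψ    => insert (Formula.neg ψ) (subf ψ)
  | .or ψ χ   => insert (Formula.or ψ χ) (subf ψ ∪ subf χ)
  | .diaA ψ   => insert (Formula.diaA ψ) (subf ψ)
  | .diaB ψ   => insert (Formula.diaB ψ) (subf ψ)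
  | .diaBb ψ  => insert (Formula.diaBb ψ) (subf ψ)
  | .diaLb ψ  => insert (Formula.diaLb ψ) (subf ψ)

/-- The number `|φ|` of subformulas of `φ`. -/
noncomputable def numSub (φ : Formula P) : ℕ := (subf φ).ncard

/-- Negation, identifying `¬¬α` with `α`. -/
def negc : Formula P → Formula P
  | .neg ψ => ψ
  | ψ      => Formula.neg ψ

/-- The closure `Cl(φ)`: all subformulas of `φ` and their negations. -/
def Cl (φ : Formula P) : Set (Formula P) := subf φ ∪ negc '' subf φ

/-- The extended closure `Cl⁺(φ)`: `Cl(φ)` together with all formulas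
`⟨R⟩α` and `¬⟨R⟩α` for `R ∈ {A,B,B̄,L̄}` and `α ∈ Cl(φ)`. -/
def Clp (φ : Formula P) : Set (Formula P) :=
  Cl φ ∪ {ψ | ∃ α ∈ Cl φ,
    ψ = Formula.diaA α ∨ ψ = Formula.neg (Formula.diaA α) ∨
    ψ = Formula.diaB α ∨ ψ = Formula.neg (Formula.diaB α) ∨
    ψ = Formula.diaBb α ∨ ψ = Formula.neg (Formula.diaBb α) ∨
    ψ = Formula.diaLb α ∨ ψ = Formula.neg (Formula.diaLb α)}

/-- A `φ`-atom: a nonempty, maximal locally consistent subset of `Cl⁺(φ)`. -/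
structure IsAtom (φ : Formula P) (F : Set (Formula P)) : Prop where
  nonempty : F.Nonempty
  subset   : F ⊆ Clp φ
  negCond  : ∀ α ∈ Clp φ, (α ∈ F ↔ negc α ∉ F)
  orCond   : ∀ α β, Formula.or α β ∈ Clp φ → (Formula.or α β ∈ F ↔ α ∈ F ∨ β ∈ F)

/-- The observables of `F`: `Obs(F) = F ∩ Cl(φ)`. -/
def Obs (φ : Formula P) (F : Set (Formula P)) : Set (Formula P) := F ∩ Cl φ

/-- The `A`-requests of `F`. -/
def ReqA (φ : Formula P) (F : Set (Formula P)) : Set (Formula P) :=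
  {α | α ∈ Cl φ ∧ Formula.diaA α ∈ F}

/-- The `B`-requests of `F`. -/
def ReqB (φ : Formula P) (F : Set (Formula P)) : Set (Formula P) :=
  {α | α ∈ Cl φ ∧ Formula.diaB α ∈ F}

/-- The `B̄`-requests of `F`. -/
def ReqBb (φ : Formula P) (F : Set (Formula P)) : Set (Formula P) :=
  {α | α ∈ Cl φ ∧ Formula.diaBb α ∈ F}

/-- The `L̄`-requests of `F`. -/
def ReqLb (φ : Formula P) (F : Set (Formula P)) : Set (Formula P) :=
  {α | α ∈ Cl φ ∧ Formula.diaLb α ∈ F}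

/-- The dependency relation `F →_A G`. -/
def DepA (φ : Formula P) (F G : Set (Formula P)) : Prop :=
  ReqA φ F = Obs φ G ∪ ReqB φ G ∪ ReqBb φ G

/-- The dependency relation `F →_B G`. -/
def DepB (φ : Formula P) (F G : Set (Formula P)) : Prop :=
  (Obs φ F ∪ ReqBb φ F ⊆ ReqBb φ G) ∧
  (ReqBb φ G ⊆ Obs φ F ∪ ReqBb φ F ∪ ReqB φ F) ∧
  (Obs φ G ∪ ReqB φ G ⊆ ReqB φ F) ∧
  (ReqB φ F ⊆ Obs φ G ∪ ReqB φ G ∪ ReqBb φ G) ∧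
  ReqLb φ F = ReqLb φ G

/-- The dependency relation `F →_L̄ G`. -/
def DepLb (φ : Formula P) (F G : Set (Formula P)) : Prop :=
  Obs φ G ∪ ReqLb φ G ⊆ ReqLb φ F

/-! ### Interval structures and semantics -/

/-- Intervals `[x,y]` with `x < y` over a linear order `O`. -/
def Interval (O : Type) [LinearOrder O] : Type := {p : O × O // p.1 < p.2}

variable {O : Type} [LinearOrder O]

/-- Allen's "meets" relation: `[x,y] A [x',y']` iff `y = x'`. -/
def relA (I J : Interval O) : Prop := I.1.2 = J.1.1

/-- Allen's "begins" relation: `[x,y] B [x',y']` iff `x = x'` and `y' < y`. -/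
def relB (I J : Interval O) : Prop := I.1.1 = J.1.1 ∧ J.1.2 < I.1.2

/-- Allen's "begun by" relation: `[x,y] B̄ [x',y']` iff `x = x'` and `y < y'`. -/
def relBb (I J : Interval O) : Prop := I.1.1 = J.1.1 ∧ I.1.2 < J.1.2

/-- Allen's "before" relation: `[x,y] L̄ [x',y']` iff `y' < x`. -/
def relLb (I J : Interval O) : Prop := J.1.2 < I.1.1

/-- Satisfaction of a formula at an interval of an interval structure
`S = (I_O, σ)`, where `σ` is the labeling with sets of propositional variables. -/
def sat (σ : Interval O → Set P) : Formula P → Interval O → Prop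
  | .atom a, I  => a ∈ σ I
  | .neg ψ, I   => ¬ sat σ ψ I
  | .or ψ χ, I  => sat σ ψ I ∨ sat σ χ I
  | .diaA ψ, I  => ∃ J, relA I J ∧ sat σ ψ J
  | .diaB ψ, I  => ∃ J, relB I J ∧ sat σ ψ J
  | .diaBb ψ, I => ∃ J, relBb I J ∧ sat σ ψ J
  | .diaLb ψ, I => ∃ J, relLb I J ∧ sat σ ψ J

/-- A linear order is strongly discrete iff there are only finitely many
points between any two points. -/
def StronglyDiscrete (O : Type) [LinearOrder O] : Prop :=
  ∀ x y : O, (Set.Ioo x y).Finite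

/-- The `φ`-type of an interval: the set of formulas of `Cl⁺(φ)` true at it. -/
def TypeS (σ : Interval O → Set P) (φ : Formula P) (I : Interval O) : Set (Formula P) :=
  {α | α ∈ Clp φ ∧ sat σ α I}

/-! ### Compass structures over a linear order -/

/-- A (consistent and fulfilling) compass `φ`-structure over a linear order `O`:
a labeling of the points `(x,y)` with `x < y` (identified with intervals) by
`φ`-atoms, satisfying consistency and fulfillment. -/
structure IsCompass (φ : Formula P) (L : Interval O → Set (Formula P)) : Prop where
  isAtom : ∀ p, IsAtom φ (L p)
  consA  : ∀ p q, relA p q → DepA φ (L p) (L q)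
  consB  : ∀ p q, relB p q → DepB φ (L p) (L q)
  consLb : ∀ p q, relLb p q → DepLb φ (L p) (L q)
  fulA   : ∀ p, ∀ α ∈ ReqA φ (L p), ∃ q, relA p q ∧ α ∈ Obs φ (L q)
  fulB   : ∀ p, ∀ α ∈ ReqB φ (L p), ∃ q, relB p q ∧ α ∈ Obs φ (L q)
  fulBb  : ∀ p, ∀ α ∈ ReqBb φ (L p), ∃ q, relBb p q ∧ α ∈ Obs φ (L q)
  fulLb  : ∀ p, ∀ α ∈ ReqLb φ (L p), ∃ q, relLb p q ∧ α ∈ Obs φ (L q)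

/-! ### Finite compass structures, over `O = {0,…,N−1}` -/

/-- A finite compass structure of size `N` (consistency conditions only):
the points are the pairs `(x,y)` with `x < y < N`, and `L` gives the labeling
by `φ`-atoms. Consistency is required for the relations `A`, `B`, `L̄`. -/
structure IsPreCompass (φ : Formula P) (N : ℕ) (L : ℕ → ℕ → Set (Formula P)) : Prop where
  isAtom : ∀ x y, x < y → y < N → IsAtom φ (L x y)
  consA  : ∀ x y z, x < y → y < z → z < N → DepA φ (L x y) (L y z)
  consB  : ∀ x z y, x < z → z < y → y < N → DepB φ (L x y) (L x z)
  consLb : ∀ u v x y, u < v → v < x → x < y → y < N → DepLb φ (L x y) (L u v)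

/-- A (consistent and fulfilling) finite compass `φ`-structure of size `N`. -/
structure IsFinCompass (φ : Formula P) (N : ℕ) (L : ℕ → ℕ → Set (Formula P))
    extends IsPreCompass φ N L : Prop where
  fulA  : ∀ x y, x < y → y < N → ∀ α ∈ ReqA φ (L x y),
            ∃ z, y < z ∧ z < N ∧ α ∈ Obs φ (L y z)
  fulB  : ∀ x y, x < y → y < N → ∀ α ∈ ReqB φ (L x y),
            ∃ z, x < z ∧ z < y ∧ α ∈ Obs φ (L x z)
  fulBb : ∀ x y, x < y → y < N → ∀ α ∈ ReqBb φ (L x y),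
            ∃ z, y < z ∧ z < N ∧ α ∈ Obs φ (L x z)
  fulLb : ∀ x y, x < y → y < N → ∀ α ∈ ReqLb φ (L x y),
            ∃ u v, u < v ∧ v < x ∧ α ∈ Obs φ (L u v)

/-- The shading of row `y`: the set of atoms occurring on row `y`. -/
def Shading (L : ℕ → ℕ → Set (Formula P)) (y : ℕ) : Set (Set (Formula P)) :=
  {F | ∃ x, x < y ∧ L x y = F}

/-- The property (WIT) of a set of points `W` being a witness set for row `y`:
every `ψ ∈ Cl(φ)` appearing in the label of a point above row `y` has a witness
in `W` at minimal height above `y`. -/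
def WitProp (φ : Formula P) (N : ℕ) (L : ℕ → ℕ → Set (Formula P)) (y : ℕ)
    (W : Set (ℕ × ℕ)) : Prop :=
  (∀ p ∈ W, p.1 < p.2 ∧ p.2 < N ∧ y < p.2) ∧
  ∀ ψ ∈ Cl φ, (∃ x' y', x' < y' ∧ y' < N ∧ y < y' ∧ ψ ∈ L x' y') →
    ∃ p ∈ W, ψ ∈ L p.1 p.2 ∧
      ∀ x' y', x' < y' → y' < N → y < y' → y' < p.2 → negc ψ ∈ L x' y'

/-- A witness set for row `y`: a minimal set satisfying (WIT). -/
def IsWitSet (φ : Formula P) (N : ℕ) (L : ℕ → ℕ → Set (Formula P)) (y : ℕ)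
    (W : Set (ℕ × ℕ)) : Prop :=
  WitProp φ N L y W ∧ ∀ W' ⊆ W, WitProp φ N L y W' → W' = W

/-- `π_ȳ(S)`: the `x`-coordinates, smaller than `ȳ`, of the points in `S`. -/
def proj (ybar : ℕ) (S : Set (ℕ × ℕ)) : Set ℕ := {x | (∃ y, (x, y) ∈ S) ∧ x < ybar}

/-- Two rows `y0 < y1` of a finite compass structure are compatible. -/
def Compatible (φ : Formula P) (N : ℕ) (L : ℕ → ℕ → Set (Formula P))
    (y0 y1 : ℕ) : Prop :=
  Shading L y0 = Shading L y1 ∧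
  L (y0 - 1) y0 = L (y1 - 1) y1 ∧
  ∃ W, IsWitSet φ N L y1 W ∧
    ∃ w : ℕ → ℕ, Set.InjOn w (proj y1 W) ∧
      ∀ x ∈ proj y1 W, w x < y0 ∧ L x y1 = L (w x) y0

/-- `#(F,y)`: the number of points on row `y` labeled by `F`. -/
noncomputable def cnt (L : ℕ → ℕ → Set (Formula P)) (y : ℕ) (F : Set (Formula P)) : ℕ :=
  Set.ncard {x | x < y ∧ L x y = F}

/-- The characteristic function of row `y`: counts occurrences of each atom,
capped at `2|φ|`. -/
noncomputable def charFn (φ : Formula P) (L : ℕ → ℕ → Set (Formula P)) (y : ℕ)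
    (F : Set (Formula P)) : ℕ :=
  min (cnt L y F) (2 * numSub φ)

/-- The formula `ξ = φ ∨ ⟨B̄⟩φ ∨ ⟨A⟩φ ∨ ⟨A⟩⟨A⟩φ`. -/
def xi (φ : Formula P) : Formula P :=
  Formula.or (Formula.or (Formula.or φ (Formula.diaBb φ)) (Formula.diaA φ))
    (Formula.diaA (Formula.diaA φ))

/-! ### Partially fulfilling structures and compass generators -/

/-- A finite compass structure of size `N` is partially fulfilling: every
request of a point strictly below the top row `N-1` is either fulfilled or
transferred to the border. -/
def PartFulfilling (φ : Formula P) (N : ℕ) (L : ℕ → ℕ → Set (Formula P)) : Prop :=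
  ∀ x y, x < y → y < N - 1 →
    (∀ ψ ∈ ReqA φ (L x y),
        (∃ z, y < z ∧ z < N ∧ ψ ∈ Obs φ (L y z)) ∨ ψ ∈ ReqBb φ (L y (N - 1))) ∧
    (∀ ψ ∈ ReqB φ (L x y), ∃ z, x < z ∧ z < y ∧ ψ ∈ Obs φ (L x z)) ∧
    (∀ ψ ∈ ReqBb φ (L x y),
        (∃ z, y < z ∧ z < N ∧ ψ ∈ Obs φ (L x z)) ∨ ψ ∈ ReqBb φ (L x (N - 1))) ∧
    (∀ ψ ∈ ReqLb φ (L x y),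
        (∃ u v, u < v ∧ v < x ∧ ψ ∈ Obs φ (L u v)) ∨ ψ ∈ ReqLb φ (L 0 1))

/-- The defining property of a future witness set for row `y`. -/
def FutWitProp (φ : Formula P) (N : ℕ) (L : ℕ → ℕ → Set (Formula P)) (y : ℕ)
    (FW : Set ℕ) : Prop :=
  (∀ x ∈ FW, x < y) ∧
  ∀ F ∈ Shading L y, ∃ x ∈ FW, L x y = F ∧
    ∀ ψ ∈ ReqBb φ F, ∃ y', y < y' ∧ y' < N ∧ ψ ∈ Obs φ (L x y')

/-- A future witness set for row `y`: a minimal set satisfying `FutWitProp`. -/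
def IsFutWit (φ : Formula P) (N : ℕ) (L : ℕ → ℕ → Set (Formula P)) (y : ℕ)
    (FW : Set ℕ) : Prop :=
  FutWitProp φ N L y FW ∧ ∀ FW' ⊆ FW, FutWitProp φ N L y FW' → FW' = FW

/-- The defining property of a past witness set for row `y`. -/
def PastWitProp (φ : Formula P) (N : ℕ) (L : ℕ → ℕ → Set (Formula P)) (y : ℕ)
    (PW : Set (ℕ × ℕ)) : Prop :=
  (∀ p ∈ PW, p.1 < p.2 ∧ p.2 < N) ∧
  ∀ ψ ∈ ReqLb φ (L (y - 1) y), ∃ p ∈ PW, ψ ∈ Obs φ (L p.1 p.2) ∧ p.2 < y - 1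

/-- A past witness set for row `y`: a minimal set satisfying `PastWitProp`. -/
def IsPastWit (φ : Formula P) (N : ℕ) (L : ℕ → ℕ → Set (Formula P)) (y : ℕ)
    (PW : Set (ℕ × ℕ)) : Prop :=
  PastWitProp φ N L y PW ∧ ∀ PW' ⊆ PW, PastWitProp φ N L y PW' → PW' = PW

/-- Conditions (G1)–(G6) on the four distinguished rows of a compass generator. -/
structure GenRows (φ : Formula P) (N : ℕ) (L : ℕ → ℕ → Set (Formula P))
    (yφ y0 y1 y2 : ℕ) : Prop where
  rowφpos : 0 < yφ
  rowφlt  : yφ < N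
  row0pos : 0 < y0
  row2lt  : y2 < N
  g1a : y0 < y1
  g1b : y1 < y2
  g1c : y0 ≤ yφ
  g2  : φ ∈ L (yφ - 1) yφ ∨ Formula.diaBb φ ∈ L (yφ - 1) yφ
  g3a : Shading L y1 ⊆ Shading L y0
  g3b : L (y0 - 1) y0 = L (y1 - 1) y1
  g4  : ∃ PW, IsPastWit φ N L y1 PW ∧ ∀ x ∈ proj y1 PW, y0 ≤ x
  g5a : Shading L (N - 1) ⊆ Shading L y2
  g5b : L (y2 - 1) y2 = L (N - 2) (N - 1)
  g6  : ∃ FW, IsFutWit φ N L y2 FW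

/-- A compass generator for `φ`: a finite, partially fulfilling compass
structure admitting four rows satisfying (G1)–(G6). -/
structure IsCompassGen (φ : Formula P) (N : ℕ) (L : ℕ → ℕ → Set (Formula P)) : Prop where
  pre     : IsPreCompass φ N L
  partFul : PartFulfilling φ N L
  rows    : ∃ yφ y0 y1 y2, GenRows φ N L yφ y0 y1 y2

/-- Global compatibility of two rows `y < y'` of a compass generator with
distinguished rows `yφ, y0, y1, y2`. -/
def GlobCompatible (φ : Formula P) (N : ℕ) (L : ℕ → ℕ → Set (Formula P))
    (yφ y0 y1 y2 y y' : ℕ) : Prop :=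
  L (y - 1) y = L (y' - 1) y' ∧ Shading L y = Shading L y' ∧
  (∀ ybar ∈ ({yφ, y0, y1, y2} : Set ℕ), ¬ (y ≤ ybar ∧ ybar ≤ y')) ∧
  ∃ PW FW,
    IsPastWit φ N L y1 PW ∧
    (∀ p ∈ PW, ¬ (y ≤ p.2 ∧ p.2 ≤ y')) ∧
    IsFutWit φ N L y2 FW ∧
    (∀ xbar ∈ FW, ∀ ψ ∈ ReqBb φ (L xbar y2),
      ∃ ybar, y2 < ybar ∧ ybar < N ∧ ψ ∈ Obs φ (L xbar ybar) ∧ ¬ (y ≤ ybar ∧ ybar ≤ y')) ∧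
    ∃ W, IsWitSet φ N L y' W ∧
      ∃ w : ℕ → ℕ,
        Set.InjOn w (proj y' (W ∪ PW ∪ (fun x => (x, y2)) '' FW)) ∧
        (∀ x ∈ proj y' (W ∪ PW ∪ (fun x => (x, y2)) '' FW),
          w x < y ∧ L x y' = L (w x) y) ∧
        (∀ x ∈ proj y' PW, w x = x)


/-! ### Basic lemmas about subformulas and closures -/

lemma mem_subf_self (φ : Formula P) : φ ∈ subf φ := by
  cases φ <;> simp [subf]

lemma subf_finite (φ : Formula P) : (subf φ).Finite := by
  induction φ with
  | atom a => exact Set.finite_singleton _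
  | neg ψ ih => exact ih.insert _
  | or ψ χ ih1 ih2 => exact (ih1.union ih2).insert _
  | diaA ψ ih => exact ih.insert _
  | diaB ψ ih => exact ih.insert _
  | diaBb ψ ih => exact ih.insert _
  | diaLb ψ ih => exact ih.insert _

lemma subf_subset_of_mem {χ γ : Formula P} (h : γ ∈ subf χ) : subf γ ⊆ subf χ := by
  induction χ with
  | atom a =>
      simp only [subf, Set.mem_singleton_iff] at h; subst h; exact subset_rfl
  | neg ψ ih =>
      rcases (by simpa [subf] using h : γ = Formula.neg ψ ∨ γ ∈ subf ψ) with h1 | h2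
      · subst h1; exact subset_rfl
      · exact (ih h2).trans (Set.subset_insert _ _)
  | or ψ ψ' ih1 ih2 =>
      rcases (by simpa [subf] using h : γ = Formula.or ψ ψ' ∨ γ ∈ subf ψ ∨ γ ∈ subf ψ') with h1 | h2 | h3
      · subst h1; exact subset_rfl
      · exact (ih1 h2).trans ((Set.subset_union_left).trans (Set.subset_insert _ _))
      · exact (ih2 h3).trans ((Set.subset_union_right).trans (Set.subset_insert _ _))
  | diaA ψ ih =>
      rcases (by simpa [subf] using h : γ = Formula.diaA ψ ∨ γ ∈ subf ψ) with h1 | h2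
      · subst h1; exact subset_rfl
      · exact (ih h2).trans (Set.subset_insert _ _)
  | diaB ψ ih =>
      rcases (by simpa [subf] using h : γ = Formula.diaB ψ ∨ γ ∈ subf ψ) with h1 | h2
      · subst h1; exact subset_rfl
      · exact (ih h2).trans (Set.subset_insert _ _)
  | diaBb ψ ih =>
      rcases (by simpa [subf] using h : γ = Formula.diaBb ψ ∨ γ ∈ subf ψ) with h1 | h2
      · subst h1; exact subset_rfl
      · exact (ih h2).trans (Set.subset_insert _ _)
  | diaLb ψ ih =>
      rcases (by simpa [subf] using h : γ = Formula.diaLb ψ ∨ γ ∈ subf ψ) with h1 | h2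
      · subst h1; exact subset_rfl
      · exact (ih h2).trans (Set.subset_insert _ _)

lemma neg_mem_subf {χ β : Formula P} (h : Formula.neg β ∈ subf χ) : β ∈ subf χ :=
  subf_subset_of_mem h (by simp [subf, mem_subf_self])

lemma or_mem_subf {χ β γ : Formula P} (h : Formula.or β γ ∈ subf χ) :
    β ∈ subf χ ∧ γ ∈ subf χ :=
  ⟨subf_subset_of_mem h (by simp [subf]; right; left; exact mem_subf_self _),
   subf_subset_of_mem h (by simp [subf]; right; right; exact mem_subf_self _)⟩

lemma diaA_mem_subf {χ β : Formula P} (h : Formula.diaA β ∈ subf χ) : β ∈ subf χ :=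
  subf_subset_of_mem h (by simp [subf, mem_subf_self])
lemma diaB_mem_subf {χ β : Formula P} (h : Formula.diaB β ∈ subf χ) : β ∈ subf χ :=
  subf_subset_of_mem h (by simp [subf, mem_subf_self])
lemma diaBb_mem_subf {χ β : Formula P} (h : Formula.diaBb β ∈ subf χ) : β ∈ subf χ :=
  subf_subset_of_mem h (by simp [subf, mem_subf_self])
lemma diaLb_mem_subf {χ β : Formula P} (h : Formula.diaLb β ∈ subf χ) : β ∈ subf χ :=
  subf_subset_of_mem h (by simp [subf, mem_subf_self])

lemma Cl_finite (φ : Formula P) : (Cl φ).Finite :=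
  (subf_finite φ).union ((subf_finite φ).image _)

lemma subf_subset_Cl {φ : Formula P} : subf φ ⊆ Cl φ := Set.subset_union_left

lemma Cl_subset_Clp {φ : Formula P} : Cl φ ⊆ Clp φ := Set.subset_union_left

lemma Clp_finite (φ : Formula P) : (Clp φ).Finite := by
  refine (Cl_finite φ).union (Set.Finite.subset
    ((((Cl_finite φ).image Formula.diaA).union ((Cl_finite φ).image (fun α => Formula.neg (Formula.diaA α)))).union
      ((((Cl_finite φ).image Formula.diaB).union ((Cl_finite φ).image (fun α => Formula.neg (Formula.diaB α)))).union
        ((((Cl_finite φ).image Formula.diaBb).union ((Cl_finite φ).image (fun α => Formula.neg (Formula.diaBb α)))).union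
          (((Cl_finite φ).image Formula.diaLb).union ((Cl_finite φ).image (fun α => Formula.neg (Formula.diaLb α))))))) ?_)
  rintro ψ ⟨α, hα, h⟩
  rcases h with h|h|h|h|h|h|h|h <;> subst h <;> simp [Set.mem_image] <;> tauto

/-- Case analysis for membership in `Cl`. -/
lemma mem_Cl_cases {χ α : Formula P} (h : α ∈ Cl χ) :
    α ∈ subf χ ∨ ∃ γ ∈ subf χ, α = Formula.neg γ := by
  rcases h with h | ⟨γ, hγ, hne⟩
  · exact Or.inl h
  · cases γ with
    | neg δ =>
        left
        have : negc (Formula.neg δ) = δ := rfl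
        rw [this] at hne; subst hne
        exact neg_mem_subf hγ
    | atom a => right; exact ⟨_, hγ, hne.symm⟩
    | or β γ' => right; exact ⟨_, hγ, hne.symm⟩
    | diaA β => right; exact ⟨_, hγ, hne.symm⟩
    | diaB β => right; exact ⟨_, hγ, hne.symm⟩
    | diaBb β => right; exact ⟨_, hγ, hne.symm⟩
    | diaLb β => right; exact ⟨_, hγ, hne.symm⟩

lemma neg_mem_Cl {χ β : Formula P} (h : Formula.neg β ∈ Cl χ) : β ∈ Cl χ := by
  rcases mem_Cl_cases h with h | ⟨γ, hγ, hne⟩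
  · exact subf_subset_Cl (neg_mem_subf h)
  · cases (by injection hne : β = γ); exact subf_subset_Cl hγ

lemma or_mem_Cl {χ β γ : Formula P} (h : Formula.or β γ ∈ Cl χ) : β ∈ Cl χ ∧ γ ∈ Cl χ := by
  rcases mem_Cl_cases h with h | ⟨δ, _, hne⟩
  · exact ⟨subf_subset_Cl (or_mem_subf h).1, subf_subset_Cl (or_mem_subf h).2⟩
  · exact absurd hne (by simp)

lemma diaA_mem_Cl {χ β : Formula P} (h : Formula.diaA β ∈ Cl χ) : β ∈ Cl χ := by
  rcases mem_Cl_cases h with h | ⟨δ, _, hne⟩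
  · exact subf_subset_Cl (diaA_mem_subf h)
  · exact absurd hne (by simp)
lemma diaB_mem_Cl {χ β : Formula P} (h : Formula.diaB β ∈ Cl χ) : β ∈ Cl χ := by
  rcases mem_Cl_cases h with h | ⟨δ, _, hne⟩
  · exact subf_subset_Cl (diaB_mem_subf h)
  · exact absurd hne (by simp)
lemma diaBb_mem_Cl {χ β : Formula P} (h : Formula.diaBb β ∈ Cl χ) : β ∈ Cl χ := by
  rcases mem_Cl_cases h with h | ⟨δ, _, hne⟩
  · exact subf_subset_Cl (diaBb_mem_subf h)
  · exact absurd hne (by simp)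
lemma diaLb_mem_Cl {χ β : Formula P} (h : Formula.diaLb β ∈ Cl χ) : β ∈ Cl χ := by
  rcases mem_Cl_cases h with h | ⟨δ, _, hne⟩
  · exact subf_subset_Cl (diaLb_mem_subf h)
  · exact absurd hne (by simp)

lemma negc_mem_Cl {χ α : Formula P} (h : α ∈ Cl χ) : negc α ∈ Cl χ := by
  rcases mem_Cl_cases h with h | ⟨γ, hγ, hne⟩
  · exact Or.inr ⟨α, h, rfl⟩
  · subst hne
    have : negc (Formula.neg γ) = γ := rfl
    rw [this]; exact subf_subset_Cl hγ

lemma diaA_mem_Clp {χ α : Formula P} (h : α ∈ Cl χ) : Formula.diaA α ∈ Clp χ :=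
  Or.inr ⟨α, h, by simp⟩
lemma diaB_mem_Clp {χ α : Formula P} (h : α ∈ Cl χ) : Formula.diaB α ∈ Clp χ :=
  Or.inr ⟨α, h, by simp⟩
lemma diaBb_mem_Clp {χ α : Formula P} (h : α ∈ Cl χ) : Formula.diaBb α ∈ Clp χ :=
  Or.inr ⟨α, h, by simp⟩
lemma diaLb_mem_Clp {χ α : Formula P} (h : α ∈ Cl χ) : Formula.diaLb α ∈ Clp χ :=
  Or.inr ⟨α, h, by simp⟩

lemma negc_neg (ψ : Formula P) : negc (Formula.neg ψ) = ψ := rfl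

lemma sat_negc {O : Type} [LinearOrder O] (σ : Interval O → Set P) (α : Formula P)
    (I : Interval O) : sat σ (negc α) I ↔ ¬ sat σ α I := by
  cases α <;> simp [negc, sat]

lemma negc_mem_Clp {χ α : Formula P} (h : α ∈ Clp χ) : negc α ∈ Clp χ := by
  rcases h with h | ⟨β, hβ, h8⟩
  · exact Cl_subset_Clp (negc_mem_Cl h)
  · rcases h8 with h|h|h|h|h|h|h|h <;> subst h
    · exact Or.inr ⟨β, hβ, by simp [negc]⟩
    · rw [negc_neg]; exact Or.inr ⟨β, hβ, by simp⟩
    · exact Or.inr ⟨β, hβ, by simp [negc]⟩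
    · rw [negc_neg]; exact Or.inr ⟨β, hβ, by simp⟩
    · exact Or.inr ⟨β, hβ, by simp [negc]⟩
    · rw [negc_neg]; exact Or.inr ⟨β, hβ, by simp⟩
    · exact Or.inr ⟨β, hβ, by simp [negc]⟩
    · rw [negc_neg]; exact Or.inr ⟨β, hβ, by simp⟩
/-! ### From finite compass structures to finite models -/

/-- Interval of `Fin N` from natural number data. -/
def mkI {N : ℕ} (x y : ℕ) (hxy : x < y) (hy : y < N) : Interval (Fin N) :=
  ⟨(⟨x, hxy.trans hy⟩, ⟨y, hy⟩), Fin.mk_lt_mk.mpr hxy⟩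

/-- Valuation read off from a labeling. -/
def sigOf (L : ℕ → ℕ → Set (Formula P)) (N : ℕ) : Interval (Fin N) → Set P :=
  fun I => {a | Formula.atom a ∈ L I.1.1.1 I.1.2.1}

lemma interval_eq_mkI {N : ℕ} (J : Interval (Fin N)) :
    J = mkI J.1.1.1 J.1.2.1 J.2 J.1.2.2 := by
  obtain ⟨⟨u, v⟩, h⟩ := J
  simp [mkI]; rfl

lemma truth_lemma {χ : Formula P} {N : ℕ} {L : ℕ → ℕ → Set (Formula P)}
    (hC : IsFinCompass χ N L) :
    ∀ α, α ∈ Cl χ → ∀ I : Interval (Fin N),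
      (α ∈ L I.1.1.1 I.1.2.1 ↔ sat (sigOf L N) α I) := by
  intro α
  induction α with
  | atom a => intro _ I; simp [sat, sigOf]
  | neg β ih =>
      intro hmem I
      have hβ : β ∈ Cl χ := neg_mem_Cl hmem
      have hxy : (I.1.1.1 : ℕ) < I.1.2.1 := I.2
      have hAt := hC.isAtom I.1.1.1 I.1.2.1 hxy I.1.2.2
      have hneg := hAt.negCond (Formula.neg β) (Cl_subset_Clp hmem)
      rw [negc_neg] at hneg
      have : sat (sigOf L N) (Formula.neg β) I ↔ ¬ sat (sigOf L N) β I := Iff.rfl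
      rw [this, hneg, ← ih hβ I]
  | or β γ ih1 ih2 =>
      intro hmem I
      have hβ := (or_mem_Cl hmem).1
      have hγ := (or_mem_Cl hmem).2
      have hxy : (I.1.1.1 : ℕ) < I.1.2.1 := I.2
      have hAt := hC.isAtom I.1.1.1 I.1.2.1 hxy I.1.2.2
      have hor := hAt.orCond β γ (Cl_subset_Clp hmem)
      have : sat (sigOf L N) (Formula.or β γ) I ↔
          sat (sigOf L N) β I ∨ sat (sigOf L N) γ I := Iff.rfl
      rw [this, hor, ← ih1 hβ I, ← ih2 hγ I]
  | diaA β ih =>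
      intro hmem I
      have hβ : β ∈ Cl χ := diaA_mem_Cl hmem
      have hxy : (I.1.1.1 : ℕ) < I.1.2.1 := I.2
      constructor
      · intro h
        obtain ⟨z, hyz, hzN, hObs⟩ :=
          hC.fulA I.1.1.1 I.1.2.1 hxy I.1.2.2 β ⟨hβ, h⟩
        refine ⟨mkI I.1.2.1 z hyz hzN, ?_, ?_⟩
        · show I.1.2 = _
          exact (Fin.eta _ _).symm
        · exact (ih hβ (mkI I.1.2.1 z hyz hzN)).mp hObs.1
      · rintro ⟨J, hrel, hsat⟩
        have hJ1 : J.1.1.1 = I.1.2.1 := by rw [← hrel]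
        have hJmem : β ∈ L J.1.1.1 J.1.2.1 := (ih hβ J).mpr hsat
        have hzlt : (J.1.1.1 : ℕ) < J.1.2.1 := J.2
        have hdep := hC.consA I.1.1.1 I.1.2.1 J.1.2.1 hxy (hJ1 ▸ hzlt) J.1.2.2
        have : β ∈ ReqA χ (L I.1.1.1 I.1.2.1) := by
          rw [hdep]
          exact Or.inl (Or.inl ⟨hJ1 ▸ hJmem, hβ⟩)
        exact this.2
  | diaB β ih =>
      intro hmem I
      have hβ : β ∈ Cl χ := diaB_mem_Cl hmem
      have hxy : (I.1.1.1 : ℕ) < I.1.2.1 := I.2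
      constructor
      · intro h
        obtain ⟨z, hxz, hzy, hObs⟩ :=
          hC.fulB I.1.1.1 I.1.2.1 hxy I.1.2.2 β ⟨hβ, h⟩
        refine ⟨mkI I.1.1.1 z hxz (hzy.trans (lt_of_lt_of_le I.1.2.2 le_rfl)), ?_, ?_⟩
        · exact ⟨(Fin.eta _ _).symm, hzy⟩
        · exact (ih hβ _).mp hObs.1
      · rintro ⟨J, hrel, hsat⟩
        have hJ1 : J.1.1.1 = I.1.1.1 := by rw [hrel.1]
        have hJmem : β ∈ L J.1.1.1 J.1.2.1 := (ih hβ J).mpr hsat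
        have hzy : (J.1.2.1 : ℕ) < I.1.2.1 := hrel.2
        have hxz : (I.1.1.1 : ℕ) < J.1.2.1 := hJ1 ▸ J.2
        have hdep := hC.consB I.1.1.1 J.1.2.1 I.1.2.1 hxz hzy I.1.2.2
        exact (hdep.2.2.1 (Or.inl ⟨hJ1 ▸ hJmem, hβ⟩)).2
  | diaBb β ih =>
      intro hmem I
      have hβ : β ∈ Cl χ := diaBb_mem_Cl hmem
      have hxy : (I.1.1.1 : ℕ) < I.1.2.1 := I.2
      constructor
      · intro h
        obtain ⟨z, hyz, hzN, hObs⟩ :=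
          hC.fulBb I.1.1.1 I.1.2.1 hxy I.1.2.2 β ⟨hβ, h⟩
        refine ⟨mkI I.1.1.1 z (hxy.trans hyz) hzN, ?_, ?_⟩
        · exact ⟨(Fin.eta _ _).symm, hyz⟩
        · exact (ih hβ _).mp hObs.1
      · rintro ⟨J, hrel, hsat⟩
        have hJ1 : J.1.1.1 = I.1.1.1 := by rw [hrel.1]
        have hJmem : β ∈ L J.1.1.1 J.1.2.1 := (ih hβ J).mpr hsat
        have hyz : (I.1.2.1 : ℕ) < J.1.2.1 := hrel.2
        have hdep := hC.consB I.1.1.1 I.1.2.1 J.1.2.1 hxy hyz J.1.2.2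
        exact (hdep.1 (Or.inl ⟨hJ1 ▸ hJmem, hβ⟩)).2
  | diaLb β ih =>
      intro hmem I
      have hβ : β ∈ Cl χ := diaLb_mem_Cl hmem
      have hxy : (I.1.1.1 : ℕ) < I.1.2.1 := I.2
      constructor
      · intro h
        obtain ⟨u, v, huv, hvx, hObs⟩ :=
          hC.fulLb I.1.1.1 I.1.2.1 hxy I.1.2.2 β ⟨hβ, h⟩
        have hvN : v < N := (hvx.trans hxy).trans I.1.2.2
        refine ⟨mkI u v huv hvN, hvx, ?_⟩
        exact (ih hβ _).mp hObs.1
      · rintro ⟨J, hrel, hsat⟩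
        have hJmem : β ∈ L J.1.1.1 J.1.2.1 := (ih hβ J).mpr hsat
        have huv : (J.1.1.1 : ℕ) < J.1.2.1 := J.2
        have hvx : (J.1.2.1 : ℕ) < I.1.1.1 := hrel
        have hdep := hC.consLb J.1.1.1 J.1.2.1 I.1.1.1 I.1.2.1 huv hvx hxy I.1.2.2
        exact (hdep (Or.inl ⟨hJmem, hβ⟩)).2

lemma backward_dir {φ : Formula P} {N : ℕ} {L : ℕ → ℕ → Set (Formula P)}
    (hN : 1 < N) (hC : IsFinCompass (xi φ) N L) (hξ : xi φ ∈ L 0 1) :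
    ∃ (O : Type) (_ : LinearOrder O) (_ : Finite O)
      (σ : Interval O → Set P) (I : Interval O), sat σ φ I := by
  refine ⟨Fin N, inferInstance, inferInstance, sigOf L N, ?_⟩
  have hmem : xi φ ∈ Cl (xi φ) := subf_subset_Cl (mem_subf_self _)
  have h01 := (truth_lemma hC (xi φ) hmem (mkI 0 1 one_pos hN)).mp hξ
  have : sat (sigOf L N) φ (mkI 0 1 one_pos hN) ∨
      sat (sigOf L N) (Formula.diaBb φ) (mkI 0 1 one_pos hN) ∨
      sat (sigOf L N) (Formula.diaA φ) (mkI 0 1 one_pos hN) ∨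
      sat (sigOf L N) (Formula.diaA (Formula.diaA φ)) (mkI 0 1 one_pos hN) := by
    rcases h01 with ((h | h) | h) | h
    · exact Or.inl h
    · exact Or.inr (Or.inl h)
    · exact Or.inr (Or.inr (Or.inl h))
    · exact Or.inr (Or.inr (Or.inr h))
  rcases this with h | ⟨J, _, h⟩ | ⟨J, _, h⟩ | ⟨J, _, ⟨J', _, h⟩⟩
  · exact ⟨_, h⟩
  · exact ⟨J, h⟩
  · exact ⟨J, h⟩
  · exact ⟨J', h⟩
/-! ### Transporting models along order isomorphisms -/

def Interval.map {O O' : Type} [LinearOrder O] [LinearOrder O'] (e : O ≃o O')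
    (I : Interval O) : Interval O' :=
  ⟨(e I.1.1, e I.1.2), by simpa using I.2⟩

lemma Interval.map_symm_map {O O' : Type} [LinearOrder O] [LinearOrder O'] (e : O ≃o O')
    (I : Interval O) : Interval.map e.symm (Interval.map e I) = I := by
  apply Subtype.ext
  simp [Interval.map, Prod.ext_iff]

lemma Interval.map_map_symm {O O' : Type} [LinearOrder O] [LinearOrder O'] (e : O ≃o O')
    (J : Interval O') : Interval.map e (Interval.map e.symm J) = J := by
  apply Subtype.ext
  simp [Interval.map, Prod.ext_iff]

lemma sat_map {O O' : Type} [LinearOrder O] [LinearOrder O'] (e : O ≃o O')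
    (σ : Interval O → Set P) (α : Formula P) :
    ∀ I : Interval O,
      sat (fun J => σ (Interval.map e.symm J)) α (Interval.map e I) ↔ sat σ α I := by
  induction α with
  | atom a => intro I; show a ∈ σ _ ↔ a ∈ σ I; rw [Interval.map_symm_map]
  | neg β ih => intro I; exact not_congr (ih I)
  | or β γ ih1 ih2 => intro I; exact or_congr (ih1 I) (ih2 I)
  | diaA β ih =>
      intro I
      constructor
      · rintro ⟨J', hr, hs⟩
        refine ⟨Interval.map e.symm J', ?_, ?_⟩
        · show I.1.2 = e.symm J'.1.1
          have : e I.1.2 = J'.1.1 := hr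
          rw [← this, OrderIso.symm_apply_apply]
        · have := (ih (Interval.map e.symm J')).symm
          rw [Interval.map_map_symm] at this
          exact this.mpr hs
      · rintro ⟨J, hr, hs⟩
        exact ⟨Interval.map e J, congrArg e hr, (ih J).mpr hs⟩
  | diaB β ih =>
      intro I
      constructor
      · rintro ⟨J', ⟨hr1, hr2⟩, hs⟩
        refine ⟨Interval.map e.symm J', ⟨?_, ?_⟩, ?_⟩
        · show I.1.1 = e.symm J'.1.1
          have : e I.1.1 = J'.1.1 := hr1
          rw [← this, OrderIso.symm_apply_apply]
        · show e.symm J'.1.2 < I.1.2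
          have h2' : e.symm J'.1.2 < e.symm (e I.1.2) := e.symm.lt_iff_lt.mpr hr2
          rwa [OrderIso.symm_apply_apply] at h2'
        · have := (ih (Interval.map e.symm J')).symm
          rw [Interval.map_map_symm] at this
          exact this.mpr hs
      · rintro ⟨J, ⟨hr1, hr2⟩, hs⟩
        exact ⟨Interval.map e J, ⟨congrArg e hr1, e.lt_iff_lt.mpr hr2⟩, (ih J).mpr hs⟩
  | diaBb β ih =>
      intro I
      constructor
      · rintro ⟨J', ⟨hr1, hr2⟩, hs⟩
        refine ⟨Interval.map e.symm J', ⟨?_, ?_⟩, ?_⟩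
        · show I.1.1 = e.symm J'.1.1
          have : e I.1.1 = J'.1.1 := hr1
          rw [← this, OrderIso.symm_apply_apply]
        · show I.1.2 < e.symm J'.1.2
          have h2' : e.symm (e I.1.2) < e.symm J'.1.2 := e.symm.lt_iff_lt.mpr hr2
          rwa [OrderIso.symm_apply_apply] at h2'
        · have := (ih (Interval.map e.symm J')).symm
          rw [Interval.map_map_symm] at this
          exact this.mpr hs
      · rintro ⟨J, ⟨hr1, hr2⟩, hs⟩
        exact ⟨Interval.map e J, ⟨congrArg e hr1, e.lt_iff_lt.mpr hr2⟩, (ih J).mpr hs⟩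
  | diaLb β ih =>
      intro I
      constructor
      · rintro ⟨J', hr, hs⟩
        refine ⟨Interval.map e.symm J', ?_, ?_⟩
        · show e.symm J'.1.2 < I.1.1
          have h2' : e.symm J'.1.2 < e.symm (e I.1.1) := e.symm.lt_iff_lt.mpr hr
          rwa [OrderIso.symm_apply_apply] at h2'
        · have := (ih (Interval.map e.symm J')).symm
          rw [Interval.map_map_symm] at this
          exact this.mpr hs
      · rintro ⟨J, hr, hs⟩
        exact ⟨Interval.map e J, e.lt_iff_lt.mpr hr, (ih J).mpr hs⟩

/-! ### The compass structure of types -/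

open scoped Classical in
/-- The labeling of points by types of intervals. -/
noncomputable def typeL (N : ℕ) (σ : Interval (Fin N) → Set P) (χ : Formula P) :
    ℕ → ℕ → Set (Formula P) :=
  fun x y => if h : x < y ∧ y < N then TypeS σ χ (mkI x y h.1 h.2) else ∅

lemma typeL_eq {N : ℕ} (σ : Interval (Fin N) → Set P) (χ : Formula P) {x y : ℕ}
    (h1 : x < y) (h2 : y < N) : typeL N σ χ x y = TypeS σ χ (mkI x y h1 h2) :=
  dif_pos ⟨h1, h2⟩

section TypeMem

variable {O : Type} [LinearOrder O] {σ : Interval O → Set P} {χ α : Formula P} {I : Interval O}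

lemma mem_TypeS : α ∈ TypeS σ χ I ↔ α ∈ Clp χ ∧ sat σ α I := Iff.rfl

lemma mem_Obs_TypeS : α ∈ Obs χ (TypeS σ χ I) ↔ α ∈ Cl χ ∧ sat σ α I :=
  ⟨fun h => ⟨h.2, h.1.2⟩, fun h => ⟨⟨Cl_subset_Clp h.1, h.2⟩, h.1⟩⟩

lemma mem_ReqA_TypeS : α ∈ ReqA χ (TypeS σ χ I) ↔
    α ∈ Cl χ ∧ ∃ J, relA I J ∧ sat σ α J :=
  ⟨fun h => ⟨h.1, h.2.2⟩, fun h => ⟨h.1, diaA_mem_Clp h.1, h.2⟩⟩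

lemma mem_ReqB_TypeS : α ∈ ReqB χ (TypeS σ χ I) ↔
    α ∈ Cl χ ∧ ∃ J, relB I J ∧ sat σ α J :=
  ⟨fun h => ⟨h.1, h.2.2⟩, fun h => ⟨h.1, diaB_mem_Clp h.1, h.2⟩⟩

lemma mem_ReqBb_TypeS : α ∈ ReqBb χ (TypeS σ χ I) ↔
    α ∈ Cl χ ∧ ∃ J, relBb I J ∧ sat σ α J :=
  ⟨fun h => ⟨h.1, h.2.2⟩, fun h => ⟨h.1, diaBb_mem_Clp h.1, h.2⟩⟩

lemma mem_ReqLb_TypeS : α ∈ ReqLb χ (TypeS σ χ I) ↔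
    α ∈ Cl χ ∧ ∃ J, relLb I J ∧ sat σ α J :=
  ⟨fun h => ⟨h.1, h.2.2⟩, fun h => ⟨h.1, diaLb_mem_Clp h.1, h.2⟩⟩

lemma or_mem_Clp {β γ : Formula P} (h : Formula.or β γ ∈ Clp χ) :
    β ∈ Clp χ ∧ γ ∈ Clp χ := by
  rcases h with h | ⟨δ, _, h8⟩
  · exact ⟨Cl_subset_Clp (or_mem_Cl h).1, Cl_subset_Clp (or_mem_Cl h).2⟩
  · rcases h8 with h|h|h|h|h|h|h|h <;> simp at h

lemma isAtom_TypeS : IsAtom χ (TypeS σ χ I) := by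
  constructor
  · by_cases hs : sat σ χ I
    · exact ⟨χ, Cl_subset_Clp (subf_subset_Cl (mem_subf_self χ)), hs⟩
    · exact ⟨negc χ, negc_mem_Clp (Cl_subset_Clp (subf_subset_Cl (mem_subf_self χ))),
        (sat_negc σ χ I).mpr hs⟩
  · exact fun _ h => h.1
  · intro α hα
    constructor
    · rintro ⟨_, hs⟩ ⟨_, hns⟩
      exact (sat_negc σ α I).mp hns hs
    · intro h
      refine ⟨hα, ?_⟩
      by_contra hs
      exact h ⟨negc_mem_Clp hα, (sat_negc σ α I).mpr hs⟩
  · intro α β h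
    constructor
    · rintro ⟨_, hs | hs⟩
      · exact Or.inl ⟨(or_mem_Clp h).1, hs⟩
      · exact Or.inr ⟨(or_mem_Clp h).2, hs⟩
    · rintro (⟨_, hs⟩ | ⟨_, hs⟩)
      · exact ⟨h, Or.inl hs⟩
      · exact ⟨h, Or.inr hs⟩

end TypeMem

lemma typeCompass {N : ℕ} (σ : Interval (Fin N) → Set P) (χ : Formula P) :
    IsFinCompass χ N (typeL N σ χ) := by
  have hval : ∀ {x y : ℕ} (h1 : x < y) (h2 : y < N),
      typeL N σ χ x y = TypeS σ χ (mkI x y h1 h2) := fun h1 h2 => typeL_eq σ χ h1 h2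
  refine ⟨⟨?_, ?_, ?_, ?_⟩, ?_, ?_, ?_, ?_⟩
  · -- isAtom
    intro x y h1 h2; rw [hval h1 h2]; exact isAtom_TypeS
  · -- consA
    intro x y z hxy hyz hzN
    rw [hval hxy (hyz.trans hzN), hval hyz hzN]
    ext α
    simp only [Set.mem_union, mem_ReqA_TypeS, mem_Obs_TypeS, mem_ReqB_TypeS, mem_ReqBb_TypeS]
    constructor
    · rintro ⟨hc, J, hr, hs⟩
      rcases lt_trichotomy J.1.2.1 z with h | h | h
      · refine Or.inl (Or.inr ⟨hc, J, ⟨?_, ?_⟩, hs⟩)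
        · exact hr
        · exact h
      · refine Or.inl (Or.inl ⟨hc, ?_⟩)
        have : J = mkI y z hyz hzN := by
          apply Subtype.ext
          apply Prod.ext
          · exact hr.symm
          · exact Fin.ext h
        rwa [this] at hs
      · refine Or.inr ⟨hc, J, ⟨?_, ?_⟩, hs⟩
        · exact hr
        · exact h
    · rintro ((⟨hc, hs⟩ | ⟨hc, J, hr, hs⟩) | ⟨hc, J, hr, hs⟩)
      · exact ⟨hc, mkI y z hyz hzN, rfl, hs⟩
      · exact ⟨hc, J, hr.1, hs⟩
      · exact ⟨hc, J, hr.1, hs⟩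
  · -- consB
    intro x z y hxz hzy hyN
    rw [hval (hxz.trans hzy) hyN, hval hxz (hzy.trans hyN)]
    refine ⟨?_, ?_, ?_, ?_, ?_⟩
    · rintro α (h | h)
      · rw [mem_Obs_TypeS] at h
        exact mem_ReqBb_TypeS.mpr ⟨h.1, mkI x y (hxz.trans hzy) hyN, ⟨rfl, hzy⟩, h.2⟩
      · rw [mem_ReqBb_TypeS] at h
        obtain ⟨hc, J, ⟨h1, h2⟩, hs⟩ := h
        exact mem_ReqBb_TypeS.mpr ⟨hc, J, ⟨h1, lt_trans (show ((⟨z, _⟩ : Fin N) < ⟨y, hyN⟩)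
          from hzy) h2⟩, hs⟩
    · intro α h
      rw [mem_ReqBb_TypeS] at h
      obtain ⟨hc, J, ⟨h1, h2⟩, hs⟩ := h
      rcases lt_trichotomy J.1.2.1 y with h' | h' | h'
      · exact Or.inr (mem_ReqB_TypeS.mpr ⟨hc, J, ⟨h1, h'⟩, hs⟩)
      · refine Or.inl (Or.inl (mem_Obs_TypeS.mpr ⟨hc, ?_⟩))
        have : J = mkI x y (hxz.trans hzy) hyN := by
          apply Subtype.ext
          apply Prod.ext
          · exact h1.symm
          · exact Fin.ext h'
        rwa [this] at hs
      · exact Or.inl (Or.inr (mem_ReqBb_TypeS.mpr ⟨hc, J, ⟨h1, h'⟩, hs⟩))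
    · rintro α (h | h)
      · rw [mem_Obs_TypeS] at h
        exact mem_ReqB_TypeS.mpr ⟨h.1, mkI x z hxz (hzy.trans hyN), ⟨rfl, hzy⟩, h.2⟩
      · rw [mem_ReqB_TypeS] at h
        obtain ⟨hc, J, ⟨h1, h2⟩, hs⟩ := h
        exact mem_ReqB_TypeS.mpr ⟨hc, J, ⟨h1, lt_trans h2 hzy⟩, hs⟩
    · intro α h
      rw [mem_ReqB_TypeS] at h
      obtain ⟨hc, J, ⟨h1, h2⟩, hs⟩ := h
      rcases lt_trichotomy J.1.2.1 z with h' | h' | h'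
      · exact Or.inl (Or.inr (mem_ReqB_TypeS.mpr ⟨hc, J, ⟨h1, h'⟩, hs⟩))
      · refine Or.inl (Or.inl (mem_Obs_TypeS.mpr ⟨hc, ?_⟩))
        have : J = mkI x z hxz (hzy.trans hyN) := by
          apply Subtype.ext
          apply Prod.ext
          · exact h1.symm
          · exact Fin.ext h'
        rwa [this] at hs
      · exact Or.inr (mem_ReqBb_TypeS.mpr ⟨hc, J, ⟨h1, h'⟩, hs⟩)
    · ext α
      simp only [mem_ReqLb_TypeS]
      constructor
      · rintro ⟨hc, J, hr, hs⟩
        exact ⟨hc, J, hr, hs⟩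
      · rintro ⟨hc, J, hr, hs⟩
        exact ⟨hc, J, hr, hs⟩
  · -- consLb
    intro u v x y huv hvx hxy hyN
    have hvN : v < N := (hvx.trans hxy).trans hyN
    rw [hval hxy hyN, hval huv hvN]
    rintro α (h | h)
    · rw [mem_Obs_TypeS] at h
      exact mem_ReqLb_TypeS.mpr ⟨h.1, mkI u v huv hvN, hvx, h.2⟩
    · rw [mem_ReqLb_TypeS] at h
      obtain ⟨hc, J, hr, hs⟩ := h
      exact mem_ReqLb_TypeS.mpr ⟨hc, J,
        lt_trans hr (show ((⟨u, _⟩ : Fin N) < ⟨x, hxy.trans hyN⟩) from huv.trans hvx), hs⟩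
  · -- fulA
    intro x y hxy hyN α hα
    rw [hval hxy hyN] at hα
    obtain ⟨hc, J, hr, hs⟩ := mem_ReqA_TypeS.mp hα
    have hy1 : y = J.1.1.1 := congrArg Fin.val hr
    have hyz : y < J.1.2.1 := hy1 ▸ J.2
    refine ⟨J.1.2.1, hyz, J.1.2.2, ?_⟩
    rw [hval hyz J.1.2.2]
    refine mem_Obs_TypeS.mpr ⟨hc, ?_⟩
    have : mkI y J.1.2.1 hyz J.1.2.2 = J := by
      apply Subtype.ext
      apply Prod.ext
      · exact hr
      · exact Fin.eta _ _
    rwa [this]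
  · -- fulB
    intro x y hxy hyN α hα
    rw [hval hxy hyN] at hα
    obtain ⟨hc, J, ⟨h1, h2⟩, hs⟩ := mem_ReqB_TypeS.mp hα
    have hx1 : x = J.1.1.1 := congrArg Fin.val h1
    have hxz : x < J.1.2.1 := hx1 ▸ J.2
    have hzy : J.1.2.1 < y := h2
    refine ⟨J.1.2.1, hxz, hzy, ?_⟩
    rw [hval hxz (hzy.trans hyN)]
    refine mem_Obs_TypeS.mpr ⟨hc, ?_⟩
    have : mkI x J.1.2.1 hxz (hzy.trans hyN) = J := by
      apply Subtype.ext
      apply Prod.ext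
      · exact h1
      · exact Fin.eta _ _
    rwa [this]
  · -- fulBb
    intro x y hxy hyN α hα
    rw [hval hxy hyN] at hα
    obtain ⟨hc, J, ⟨h1, h2⟩, hs⟩ := mem_ReqBb_TypeS.mp hα
    have hx1 : x = J.1.1.1 := congrArg Fin.val h1
    have hyz : y < J.1.2.1 := h2
    have hxz : x < J.1.2.1 := hxy.trans hyz
    refine ⟨J.1.2.1, hyz, J.1.2.2, ?_⟩
    rw [hval hxz J.1.2.2]
    refine mem_Obs_TypeS.mpr ⟨hc, ?_⟩
    have : mkI x J.1.2.1 hxz J.1.2.2 = J := by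
      apply Subtype.ext
      apply Prod.ext
      · exact h1
      · exact Fin.eta _ _
    rwa [this]
  · -- fulLb
    intro x y hxy hyN α hα
    rw [hval hxy hyN] at hα
    obtain ⟨hc, J, hr, hs⟩ := mem_ReqLb_TypeS.mp hα
    have hvx : J.1.2.1 < x := hr
    refine ⟨J.1.1.1, J.1.2.1, J.2, hvx, ?_⟩
    rw [hval J.2 J.1.2.2]
    refine mem_Obs_TypeS.mpr ⟨hc, ?_⟩
    have : mkI J.1.1.1 J.1.2.1 J.2 J.1.2.2 = J := (interval_eq_mkI J).symm
    rwa [this]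

/-- Forward direction, without the size bound: a finite model yields a finite
compass structure featuring `ξ` at `(0,1)`. -/
lemma forward_base {φ : Formula P}
    (h : ∃ (O : Type) (_ : LinearOrder O) (_ : Finite O)
       (σ : Interval O → Set P) (I : Interval O), sat σ φ I) :
    ∃ (N : ℕ) (L : ℕ → ℕ → Set (Formula P)),
      1 < N ∧ IsFinCompass (xi φ) N L ∧ xi φ ∈ L 0 1 := by
  obtain ⟨O, _, _, σ, I, hI⟩ := h
  haveI : Fintype O := Fintype.ofFinite O
  set N := Fintype.card O with hN
  have e : Fin N ≃o O := monoEquivOfFin O rfl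
  set σ' : Interval (Fin N) → Set P := fun J => σ (Interval.map e.symm.symm J) with hσ'
  have hsat' : sat σ' φ (Interval.map e.symm I) := (sat_map e.symm σ φ I).mpr hI
  set I' := Interval.map e.symm I with hI'
  have hab : (I'.1.1.1 : ℕ) < I'.1.2.1 := I'.2
  have hbN : (I'.1.2.1 : ℕ) < N := I'.1.2.2
  have h1N : 1 < N := by omega
  refine ⟨N, typeL N σ' (xi φ), h1N, typeCompass σ' (xi φ), ?_⟩
  rw [typeL_eq σ' (xi φ) one_pos h1N]
  refine mem_TypeS.mpr ⟨Cl_subset_Clp (subf_subset_Cl (mem_subf_self _)), ?_⟩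
  set a := (I'.1.1.1 : ℕ) with hadef
  set b := (I'.1.2.1 : ℕ) with hbdef
  show ((sat σ' φ _ ∨ sat σ' (Formula.diaBb φ) _) ∨ sat σ' (Formula.diaA φ) _) ∨
    sat σ' (Formula.diaA (Formula.diaA φ)) _
  rcases Nat.lt_or_ge a 1 with ha | ha
  · have ha0 : a = 0 := by omega
    rcases Nat.lt_or_ge b 2 with hb | hb
    · have hb1 : b = 1 := by omega
      have hEq : mkI 0 1 one_pos h1N = I' := by
        apply Subtype.ext
        apply Prod.ext
        · exact Fin.ext (show (0 : ℕ) = a from ha0.symm)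
        · exact Fin.ext (show (1 : ℕ) = b from hb1.symm)
      exact Or.inl (Or.inl (Or.inl (hEq ▸ hsat')))
    · refine Or.inl (Or.inl (Or.inr ⟨I', ⟨?_, ?_⟩, hsat'⟩))
      · exact Fin.ext (show (0 : ℕ) = a from ha0.symm)
      · exact (show (1 : ℕ) < b by omega)
  · rcases Nat.lt_or_ge a 2 with ha2 | ha2
    · refine Or.inl (Or.inr ⟨I', ?_, hsat'⟩)
      exact Fin.ext (show (1 : ℕ) = a by omega)
    · have haN : a < N := by omega
      refine Or.inr ⟨mkI 1 a (by omega) haN, rfl, I', ?_, hsat'⟩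
      exact Fin.ext (show (a : ℕ) = a from rfl)
/-! ### Contraction of finite compass structures -/

lemma DepB_trans {χ : Formula P} {F G H : Set (Formula P)}
    (h1 : DepB χ F G) (h2 : DepB χ G H) : DepB χ F H := by
  obtain ⟨a1, a2, a3, a4, a5⟩ := h1
  obtain ⟨b1, b2, b3, b4, b5⟩ := h2
  refine ⟨?_, ?_, ?_, ?_, a5.trans b5⟩
  · intro x hx
    exact b1 (Or.inr (a1 hx))
  · intro x hx
    rcases b2 hx with (h | h) | h
    · exact Or.inr (a3 (Or.inl h))
    · exact a2 h
    · exact Or.inr (a3 (Or.inr h))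
  · intro x hx
    rcases hx with h | h
    · exact a3 (Or.inr (b3 (Or.inl h)))
    · exact a3 (Or.inr (b3 (Or.inr h)))
  · intro x hx
    rcases a4 hx with (h | h) | h
    · exact Or.inr (b1 (Or.inl h))
    · exact b4 h
    · exact Or.inr (b1 (Or.inr h))

lemma DepB_S_eq {χ : Formula P} {F G : Set (Formula P)} (h : DepB χ F G) :
    Obs χ F ∪ ReqB χ F ∪ ReqBb χ F = Obs χ G ∪ ReqB χ G ∪ ReqBb χ G := by
  obtain ⟨a1, a2, a3, a4, a5⟩ := h
  ext x
  constructor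
  · rintro ((hx | hx) | hx)
    · exact Or.inr (a1 (Or.inl hx))
    · exact a4 hx
    · exact Or.inr (a1 (Or.inr hx))
  · rintro ((hx | hx) | hx)
    · exact Or.inl (Or.inr (a3 (Or.inl hx)))
    · exact Or.inl (Or.inr (a3 (Or.inr hx)))
    · rcases a2 hx with (h | h) | h
      · exact Or.inl (Or.inl h)
      · exact Or.inr h
      · exact Or.inl (Or.inr h)

lemma contraction {χ : Formula P} {N y0 y1 : ℕ} {L : ℕ → ℕ → Set (Formula P)} {f : ℕ → ℕ}
    (hC : IsFinCompass χ N L)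
    (hy0 : 0 < y0) (h01 : y0 < y1) (h1N : y1 + 1 < N)
    (hEdge : L (y0 - 1) y0 = L (y1 - 1) y1)
    (hT : ∀ ψ ∈ Cl χ, (∃ u v, u < v ∧ v ≤ y1 ∧ ψ ∈ Obs χ (L u v)) →
          ∃ u v, u < v ∧ v < y0 ∧ ψ ∈ Obs χ (L u v))
    (hf : ∀ x, x < y0 → f x < y1 ∧ L (f x) y1 = L x y0)
    (hW : ∀ ψ, ψ ∈ Cl χ → ∀ u v, u < v → y1 < v → v < N → ψ ∈ Obs χ (L u v) →
          ∃ px py, px < py ∧ y1 < py ∧ py ≤ v ∧ py < N ∧ ψ ∈ Obs χ (L px py) ∧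
            (y1 ≤ px ∨ ∃ x, x < y0 ∧ f x = px)) :
    ∃ L' : ℕ → ℕ → Set (Formula P),
      IsFinCompass χ (N - (y1 - y0)) L' ∧ L' 0 1 = L 0 1 := by
  set δ := y1 - y0 with hδdef
  set g : ℕ → ℕ := fun c => if c < y0 then f c else if c = y0 then y1 else c + δ with hgdef
  set L' : ℕ → ℕ → Set (Formula P) :=
    fun x y => if y ≤ y0 then L x y else L (g x) (y + δ) with hL'def
  have Llow : ∀ a b : ℕ, b ≤ y0 → L' a b = L a b := by
    intro a b h; simp only [hL'def]; rw [if_pos h]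
  have Lup : ∀ a b : ℕ, y0 < b → L' a b = L (g a) (b + δ) := by
    intro a b h; simp only [hL'def]; rw [if_neg (by omega)]
  have gl : ∀ a : ℕ, a < y0 → g a = f a := by
    intro a h; simp only [hgdef]; rw [if_pos h]
  have g0 : g y0 = y1 := by simp [hgdef]
  have gh : ∀ a : ℕ, y0 < a → g a = a + δ := by
    intro a h; simp only [hgdef]; rw [if_neg (by omega), if_neg (by omega)]
  have hglt : ∀ a b : ℕ, a < b → y0 < b → g a < b + δ := by
    intro a b hab hb
    rcases Nat.lt_trichotomy a y0 with h1 | h1 | h1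
    · rw [gl a h1]; have := (hf a h1).1; omega
    · rw [h1, g0]; omega
    · rw [gh a h1]; omega
  have hg_ge : ∀ a : ℕ, y0 ≤ a → y1 ≤ g a := by
    intro a ha
    rcases Nat.eq_or_lt_of_le ha with h1 | h1
    · rw [← h1, g0]
    · rw [gh a h1]; omega
  -- constancy of `ReqA` along rows
  have reqA_row : ∀ x x' y : ℕ, x < y → x' < y → y + 1 < N →
      ReqA χ (L x y) = ReqA χ (L x' y) := by
    intro x x' y hx hx' hy
    rw [hC.consA x y (y + 1) hx (Nat.lt_succ_self y) hy,
      hC.consA x' y (y + 1) hx' (Nat.lt_succ_self y) hy]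
  -- constancy of `ReqLb` along columns
  have reqLb_col : ∀ x y z : ℕ, x < y → y < N → x < z → z < N →
      ReqLb χ (L x y) = ReqLb χ (L x z) := by
    intro x y z hxy hyN hxz hzN
    rcases Nat.lt_trichotomy y z with h | h | h
    · exact ((hC.consB x y z hxy h hzN).2.2.2.2).symm
    · rw [h]
    · exact (hC.consB x z y hxz h hyN).2.2.2.2
  refine ⟨L', ⟨⟨?_, ?_, ?_, ?_⟩, ?_, ?_, ?_, ?_⟩, Llow 0 1 (by omega)⟩
  · -- isAtom
    intro x y hxy hyN'
    by_cases hy : y ≤ y0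
    · rw [Llow x y hy]; exact hC.isAtom x y hxy (by omega)
    · rw [Lup x y (by omega)]
      exact hC.isAtom (g x) (y + δ) (hglt x y hxy (by omega)) (by omega)
  · -- consA
    intro x y z hxy hyz hzN'
    by_cases hz : z ≤ y0
    · rw [Llow x y (by omega), Llow y z hz]
      exact hC.consA x y z hxy hyz (by omega)
    · rw [Lup y z (by omega)]
      rcases Nat.lt_trichotomy y y0 with h1 | h1 | h1
      · rw [Llow x y (by omega), gl y h1]
        have e1 : ReqA χ (L x y) = Obs χ (L y y0) ∪ ReqB χ (L y y0) ∪ ReqBb χ (L y y0) :=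
          hC.consA x y y0 hxy h1 (by omega)
        have e2 : L y y0 = L (f y) y1 := ((hf y h1).2).symm
        have e3 := DepB_S_eq (hC.consB (f y) y1 (z + δ) (hf y h1).1 (by omega) (by omega))
        show ReqA χ (L x y) = _
        rw [e1, e2, ← e3]
      · subst h1
        rw [Llow x y (le_refl _), g0]
        have e1 : ReqA χ (L x y) = ReqA χ (L (y - 1) y) :=
          reqA_row x (y - 1) y hxy (by omega) (by omega)
        show ReqA χ (L x y) = _
        rw [e1, hEdge]
        exact hC.consA (y1 - 1) y1 (z + δ) (by omega) (by omega) (by omega)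
      · rw [Lup x y (by omega), gh y h1]
        exact hC.consA (g x) (y + δ) (z + δ) (hglt x y hxy (by omega)) (by omega) (by omega)
  · -- consB
    intro x z y hxz hzy hyN'
    by_cases hy : y ≤ y0
    · rw [Llow x y hy, Llow x z (by omega)]
      exact hC.consB x z y hxz hzy (by omega)
    · rw [Lup x y (by omega)]
      by_cases hz : z ≤ y0
      · have hx0 : x < y0 := by omega
        rw [gl x hx0]
        have d1 : DepB χ (L (f x) (y + δ)) (L x y0) := by
          have := hC.consB (f x) y1 (y + δ) (hf x hx0).1 (by omega) (by omega)
          rwa [(hf x hx0).2] at this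
        rcases Nat.eq_or_lt_of_le hz with h1 | h1
        · rw [Llow x z hz, h1]; exact d1
        · rw [Llow x z hz]
          exact DepB_trans d1 (hC.consB x z y0 hxz h1 (by omega))
      · rw [Lup x z (by omega)]
        exact hC.consB (g x) (z + δ) (y + δ) (hglt x z hxz (by omega)) (by omega) (by omega)
  · -- consLb
    intro u v x y huv hvx hxy hyN'
    by_cases hy : y ≤ y0
    · rw [Llow x y hy, Llow u v (by omega)]
      exact hC.consLb u v x y huv hvx hxy (by omega)
    · rw [Lup x y (by omega)]
      by_cases hv : v ≤ y0
      · rw [Llow u v hv]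
        rcases Nat.lt_trichotomy x y0 with h1 | h1 | h1
        · rw [gl x h1]
          have e1 : ReqLb χ (L (f x) (y + δ)) = ReqLb χ (L x y0) := by
            rw [reqLb_col (f x) (y + δ) y1 (by have := (hf x h1).1; omega) (by omega)
              (hf x h1).1 (by omega), (hf x h1).2]
          show Obs χ (L u v) ∪ ReqLb χ (L u v) ⊆ ReqLb χ (L (f x) (y + δ))
          rw [e1]
          exact hC.consLb u v x y0 huv hvx h1 (by omega)
        · rw [h1, g0]
          have e1 : ReqLb χ (L y1 (y + δ)) = ReqLb χ (L y1 (y1 + 1)) := by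
            rw [reqLb_col y1 (y + δ) (y1 + 1) (by omega) (by omega) (by omega) (by omega)]
          show Obs χ (L u v) ∪ ReqLb χ (L u v) ⊆ ReqLb χ (L y1 (y + δ))
          rw [e1]
          exact hC.consLb u v y1 (y1 + 1) huv (by omega) (by omega) (by omega)
        · rw [gh x h1]
          exact hC.consLb u v (x + δ) (y + δ) huv (by omega) (by omega) (by omega)
      · rw [Lup u v (by omega), gh x (by omega)]
        exact hC.consLb (g u) (v + δ) (x + δ) (y + δ) (hglt u v huv (by omega))
          (by omega) (by omega) (by omega)
  · -- fulA
    intro x y hxy hyN' α hα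
    rcases Nat.lt_trichotomy y y0 with h1 | h1 | h1
    · rw [Llow x y (by omega)] at hα
      have hmem : α ∈ Obs χ (L y y0) ∪ ReqB χ (L y y0) ∪ ReqBb χ (L y y0) := by
        rw [← hC.consA x y y0 hxy h1 (by omega)]; exact hα
      rcases hmem with (h | h) | h
      · exact ⟨y0, h1, by omega, by rw [Llow y y0 (le_refl _)]; exact h⟩
      · obtain ⟨z, hyz, hzy0, hobs⟩ := hC.fulB y y0 h1 (by omega) α h
        exact ⟨z, hyz, by omega, by rw [Llow y z (by omega)]; exact hobs⟩
      · have h' : α ∈ ReqBb χ (L (f y) y1) := by rw [(hf y h1).2]; exact h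
        obtain ⟨z, h1z, hzN, hobs⟩ := hC.fulBb (f y) y1 (hf y h1).1 (by omega) α h'
        refine ⟨z - δ, by omega, by omega, ?_⟩
        rw [Lup y (z - δ) (by omega), gl y h1, show z - δ + δ = z by omega]
        exact hobs
    · rw [Llow x y (by omega), h1] at hα
      have e1 : ReqA χ (L x y0) = ReqA χ (L (y0 - 1) y0) :=
        reqA_row x (y0 - 1) y0 (by omega) (by omega) (by omega)
      rw [e1, hEdge,
        hC.consA (y1 - 1) y1 (y1 + 1) (by omega) (by omega) (by omega)] at hα
      rcases hα with (h | h) | h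
      · refine ⟨y0 + 1, by omega, by omega, ?_⟩
        rw [h1, Lup y0 (y0 + 1) (by omega), g0, show y0 + 1 + δ = y1 + 1 by omega]
        exact h
      · obtain ⟨z, hz1, hz2, _⟩ := hC.fulB y1 (y1 + 1) (by omega) (by omega) α h
        omega
      · obtain ⟨z, h1z, hzN, hobs⟩ := hC.fulBb y1 (y1 + 1) (by omega) (by omega) α h
        refine ⟨z - δ, by omega, by omega, ?_⟩
        rw [h1, Lup y0 (z - δ) (by omega), g0, show z - δ + δ = z by omega]
        exact hobs
    · rw [Lup x y (by omega)] at hα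
      obtain ⟨z, hz1, hz2, hobs⟩ :=
        hC.fulA (g x) (y + δ) (hglt x y hxy (by omega)) (by omega) α hα
      refine ⟨z - δ, by omega, by omega, ?_⟩
      rw [Lup y (z - δ) (by omega), gh y (by omega), show z - δ + δ = z by omega]
      exact hobs
  · -- fulB
    intro x y hxy hyN' α hα
    by_cases hy : y ≤ y0
    · rw [Llow x y hy] at hα
      obtain ⟨z, hxz, hzy, hobs⟩ := hC.fulB x y hxy (by omega) α hα
      exact ⟨z, hxz, hzy, by rw [Llow x z (by omega)]; exact hobs⟩
    · rw [Lup x y (by omega)] at hα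
      obtain ⟨z, hgz, hzy, hobs⟩ :=
        hC.fulB (g x) (y + δ) (hglt x y hxy (by omega)) (by omega) α hα
      by_cases hx : x < y0
      · rcases Nat.lt_trichotomy y1 z with h1 | h1 | h1
        · refine ⟨z - δ, by omega, by omega, ?_⟩
          rw [Lup x (z - δ) (by omega), show z - δ + δ = z by omega]
          exact hobs
        · rw [gl x hx] at hobs
          rw [← h1, (hf x hx).2] at hobs
          refine ⟨y0, hx, by omega, ?_⟩
          rw [Llow x y0 (le_refl _)]
          exact hobs
        · have hα' : α ∈ ReqB χ (L (g x) y1) :=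
            (hC.consB (g x) z y1 hgz h1 (by omega)).2.2.1 (Or.inl hobs)
          rw [gl x hx, (hf x hx).2] at hα'
          obtain ⟨z', hxz', hz'y0, hobs'⟩ := hC.fulB x y0 hx (by omega) α hα'
          exact ⟨z', hxz', by omega, by rw [Llow x z' (by omega)]; exact hobs'⟩
      · have hgx : y1 ≤ g x := hg_ge x (by omega)
        have hxz : x < z - δ := by
          rcases Nat.eq_or_lt_of_le (show y0 ≤ x by omega) with h1 | h1
          · omega
          · have := gh x h1; omega
        refine ⟨z - δ, hxz, by omega, ?_⟩
        rw [Lup x (z - δ) (by omega), show z - δ + δ = z by omega]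
        exact hobs
  · -- fulBb
    intro x y hxy hyN' α hα
    by_cases hy : y ≤ y0
    · have hx0 : x < y0 := by omega
      rw [Llow x y hy] at hα
      by_cases hw : ∃ z, y < z ∧ z ≤ y0 ∧ α ∈ Obs χ (L x z)
      · obtain ⟨z, h1, h2, h3⟩ := hw
        exact ⟨z, h1, by omega, by rw [Llow x z h2]; exact h3⟩
      · push_neg at hw
        have h0 : α ∈ ReqBb χ (L x y0) := by
          rcases Nat.eq_or_lt_of_le hy with h1 | h1
          · rw [← h1]; exact hα
          · obtain ⟨z, hyz, hzN, hobs⟩ := hC.fulBb x y hxy (by omega) α hα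
            have hz0 : y0 < z := by
              by_contra hcon
              exact hw z hyz (by omega) hobs
            exact (hC.consB x y0 z hx0 hz0 hzN).1 (Or.inl hobs)
        have h1 : α ∈ ReqBb χ (L (f x) y1) := by rw [(hf x hx0).2]; exact h0
        obtain ⟨z, h1z, hzN, hobs⟩ := hC.fulBb (f x) y1 (hf x hx0).1 (by omega) α h1
        refine ⟨z - δ, by omega, by omega, ?_⟩
        rw [Lup x (z - δ) (by omega), gl x hx0, show z - δ + δ = z by omega]
        exact hobs
    · rw [Lup x y (by omega)] at hα
      obtain ⟨z, hz1, hz2, hobs⟩ :=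
        hC.fulBb (g x) (y + δ) (hglt x y hxy (by omega)) (by omega) α hα
      refine ⟨z - δ, by omega, by omega, ?_⟩
      rw [Lup x (z - δ) (by omega), show z - δ + δ = z by omega]
      exact hobs
  · -- fulLb
    intro x y hxy hyN' α hα
    have hαCl : α ∈ Cl χ := hα.1
    by_cases hy : y ≤ y0
    · rw [Llow x y hy] at hα
      obtain ⟨u, v, huv, hvx, hobs⟩ := hC.fulLb x y hxy (by omega) α hα
      exact ⟨u, v, huv, hvx, by rw [Llow u v (by omega)]; exact hobs⟩
    · rw [Lup x y (by omega)] at hα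
      rcases Nat.lt_trichotomy x y0 with h1 | h1 | h1
      · rw [gl x h1] at hα
        have e1 : ReqLb χ (L (f x) (y + δ)) = ReqLb χ (L x y0) := by
          rw [reqLb_col (f x) (y + δ) y1 (by have := (hf x h1).1; omega) (by omega)
            (hf x h1).1 (by omega), (hf x h1).2]
        rw [e1] at hα
        obtain ⟨u, v, huv, hvx, hobs⟩ := hC.fulLb x y0 h1 (by omega) α hα
        exact ⟨u, v, huv, hvx, by rw [Llow u v (by omega)]; exact hobs⟩
      · rw [h1, g0] at hα
        have e1 : ReqLb χ (L y1 (y + δ)) = ReqLb χ (L y1 (y1 + 1)) := by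
          rw [reqLb_col y1 (y + δ) (y1 + 1) (by omega) (by omega) (by omega) (by omega)]
        rw [e1] at hα
        obtain ⟨u, v, huv, hv1, hobs⟩ := hC.fulLb y1 (y1 + 1) (by omega) (by omega) α hα
        obtain ⟨u', v', hu'v', hv'0, hobs'⟩ := hT α hαCl ⟨u, v, huv, by omega, hobs⟩
        exact ⟨u', v', hu'v', by omega, by rw [Llow u' v' (by omega)]; exact hobs'⟩
      · obtain ⟨u, v, huv, hvx, hobs⟩ := hC.fulLb (g x) (y + δ)
          (hglt x y hxy (by omega)) (by omega) α hα
        have hgx : g x = x + δ := gh x h1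
        rw [hgx] at hvx
        rcases le_or_gt v y1 with hle | hgt
        · obtain ⟨u', v', hu'v', hv'0, hobs'⟩ := hT α hαCl ⟨u, v, huv, hle, hobs⟩
          exact ⟨u', v', hu'v', by omega, by rw [Llow u' v' (by omega)]; exact hobs'⟩
        · obtain ⟨px, py, hpxy, h1py, hpyv, hpyN, hobsp, hcase⟩ :=
            hW α hαCl u v huv hgt (by omega) hobs
          rcases hcase with hge | ⟨xt, hxt, hfxt⟩
          · rcases Nat.eq_or_lt_of_le hge with heq | hlt
            · refine ⟨y0, py - δ, by omega, by omega, ?_⟩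
              rw [Lup y0 (py - δ) (by omega), g0, show py - δ + δ = py by omega, heq]
              exact hobsp
            · refine ⟨px - δ, py - δ, by omega, by omega, ?_⟩
              rw [Lup (px - δ) (py - δ) (by omega), gh (px - δ) (by omega),
                show px - δ + δ = px by omega, show py - δ + δ = py by omega]
              exact hobsp
          · refine ⟨xt, py - δ, by omega, by omega, ?_⟩
            rw [Lup xt (py - δ) (by omega), gl xt hxt, hfxt,
              show py - δ + δ = py by omega]
            exact hobsp
/-! ### Counting atoms -/

/-- The set of `χ`-atoms. -/
def AtomSet (χ : Formula P) : Set (Set (Formula P)) := {F | IsAtom χ F}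

/-- A set of generators that determines every atom. -/
def genSet (χ : Formula P) : Set (Formula P) :=
  subf χ ∪ (Formula.diaA '' Cl χ ∪ Formula.diaB '' Cl χ ∪
    Formula.diaBb '' Cl χ ∪ Formula.diaLb '' Cl χ)

lemma genSet_finite (χ : Formula P) : (genSet χ).Finite :=
  (subf_finite χ).union ((((Cl_finite χ).image _).union ((Cl_finite χ).image _)).union
    ((Cl_finite χ).image _) |>.union ((Cl_finite χ).image _))

lemma genSet_ncard_le (χ : Formula P) :
    (genSet χ).ncard ≤ (subf χ).ncard + 4 * (Cl χ).ncard := by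
  have h1 := Set.ncard_union_le (subf χ) (Formula.diaA '' Cl χ ∪ Formula.diaB '' Cl χ ∪
    Formula.diaBb '' Cl χ ∪ Formula.diaLb '' Cl χ)
  have h2 := Set.ncard_union_le (Formula.diaA '' Cl χ ∪ Formula.diaB '' Cl χ ∪
    Formula.diaBb '' Cl χ) (Formula.diaLb '' Cl χ)
  have h3 := Set.ncard_union_le (Formula.diaA '' Cl χ ∪ Formula.diaB '' Cl χ)
    (Formula.diaBb '' Cl χ)
  have h4 := Set.ncard_union_le (Formula.diaA '' Cl χ) (Formula.diaB '' Cl χ)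
  have i1 := Set.ncard_image_le (f := Formula.diaA) (Cl_finite χ)
  have i2 := Set.ncard_image_le (f := Formula.diaB) (Cl_finite χ)
  have i3 := Set.ncard_image_le (f := Formula.diaBb) (Cl_finite χ)
  have i4 := Set.ncard_image_le (f := Formula.diaLb) (Cl_finite χ)
  calc (genSet χ).ncard ≤ _ := h1
    _ ≤ (subf χ).ncard + 4 * (Cl χ).ncard := by omega

lemma Cl_ncard_le (χ : Formula P) : (Cl χ).ncard ≤ 2 * (subf χ).ncard := by
  have h1 := Set.ncard_union_le (subf χ) (negc '' subf χ)
  have h2 := Set.ncard_image_le (f := negc) (subf_finite χ)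
  calc (Cl χ).ncard ≤ _ := h1
    _ ≤ 2 * (subf χ).ncard := by omega

/-- An atom is determined by its intersection with the generators. -/
lemma atom_inter_subset {χ : Formula P} {F G : Set (Formula P)}
    (hF : IsAtom χ F) (hG : IsAtom χ G) (h : F ∩ genSet χ = G ∩ genSet χ) : F ⊆ G := by
  intro β hβF
  have hβClp : β ∈ Clp χ := hF.subset hβF
  have key : ∀ γ : Formula P, β = Formula.neg γ → γ ∈ genSet χ → β ∈ G := by
    intro γ hβγ hγgen
    have hγF : γ ∉ F := by
      have := (hF.negCond β hβClp).mp hβF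
      rwa [hβγ, negc_neg] at this
    have hγG : γ ∉ G := by
      intro hc
      have : γ ∈ F ∩ genSet χ := by rw [h]; exact ⟨hc, hγgen⟩
      exact hγF this.1
    have := (hG.negCond β hβClp)
    rw [hβγ, negc_neg] at this
    rw [hβγ]
    exact this.mpr hγG
  have direct : β ∈ genSet χ → β ∈ G := by
    intro hgen
    have : β ∈ G ∩ genSet χ := by rw [← h]; exact ⟨hβF, hgen⟩
    exact this.1
  rcases hβClp with hCl | ⟨γ, hγ, h8⟩
  · rcases mem_Cl_cases hCl with hsub | ⟨γ, hγsub, heq⟩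
    · exact direct (Or.inl hsub)
    · exact key γ heq (Or.inl hγsub)
  · rcases h8 with h'|h'|h'|h'|h'|h'|h'|h'
    · exact direct (Or.inr (Or.inl (Or.inl (Or.inl ⟨γ, hγ, h'.symm⟩))))
    · exact key _ h' (Or.inr (Or.inl (Or.inl (Or.inl ⟨γ, hγ, rfl⟩))))
    · exact direct (Or.inr (Or.inl (Or.inl (Or.inr ⟨γ, hγ, h'.symm⟩))))
    · exact key _ h' (Or.inr (Or.inl (Or.inl (Or.inr ⟨γ, hγ, rfl⟩))))
    · exact direct (Or.inr (Or.inl (Or.inr ⟨γ, hγ, h'.symm⟩)))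
    · exact key _ h' (Or.inr (Or.inl (Or.inr ⟨γ, hγ, rfl⟩)))
    · exact direct (Or.inr (Or.inr ⟨γ, hγ, h'.symm⟩))
    · exact key _ h' (Or.inr (Or.inr ⟨γ, hγ, rfl⟩))

lemma atom_inter_inj {χ : Formula P} {F G : Set (Formula P)}
    (hF : IsAtom χ F) (hG : IsAtom χ G) (h : F ∩ genSet χ = G ∩ genSet χ) : F = G :=
  Set.Subset.antisymm (atom_inter_subset hF hG h) (atom_inter_subset hG hF h.symm)

lemma AtomSet_finite (χ : Formula P) :
    (AtomSet χ).Finite ∧ (AtomSet χ).ncard ≤ 2 ^ (genSet χ).ncard := by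
  classical
  have hSfin := genSet_finite χ
  set Φ : Set (Formula P) → Finset (Formula P) :=
    fun F => (hSfin.subset (Set.inter_subset_right : F ∩ genSet χ ⊆ genSet χ)).toFinset
    with hΦdef
  have hΦcoe : ∀ F, (Φ F : Set (Formula P)) = F ∩ genSet χ := by
    intro F; simp [hΦdef]
  have hinj : Set.InjOn Φ (AtomSet χ) := by
    intro F hF G hG he
    refine atom_inter_inj hF hG ?_
    rw [← hΦcoe F, ← hΦcoe G, he]
  have hmaps : ∀ F ∈ AtomSet χ, Φ F ∈ (↑hSfin.toFinset.powerset : Set (Finset (Formula P))) := by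
    intro F _
    simp only [Finset.coe_powerset, Set.mem_preimage, Set.mem_powerset_iff, Finset.coe_subset]
    rw [← Finset.coe_subset, hΦcoe F, hSfin.coe_toFinset]
    exact Set.inter_subset_right
  have htfin : (↑hSfin.toFinset.powerset : Set (Finset (Formula P))).Finite :=
    hSfin.toFinset.powerset.finite_toSet
  constructor
  · exact Set.Finite.of_finite_image (htfin.subset (Set.image_subset_iff.mpr hmaps)) hinj
  · calc (AtomSet χ).ncard ≤ (↑hSfin.toFinset.powerset : Set (Finset (Formula P))).ncard :=
        Set.ncard_le_ncard_of_injOn Φ hmaps hinj htfin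
    _ = hSfin.toFinset.powerset.card := Set.ncard_coe_finset _
    _ = 2 ^ hSfin.toFinset.card := Finset.card_powerset _
    _ = 2 ^ (genSet χ).ncard := by rw [Set.ncard_eq_toFinset_card _ hSfin]

/-- Injections between finite sets of naturals. -/
lemma exists_injOn_nat {s t : Set ℕ} (hs : s.Finite) (ht : t.Finite)
    (h : s.ncard ≤ t.ncard) : ∃ w : ℕ → ℕ, Set.InjOn w s ∧ Set.MapsTo w s t := by
  classical
  haveI := hs.fintype
  haveI := ht.fintype
  have hc : Fintype.card s ≤ Fintype.card t := by
    rw [← Nat.card_eq_fintype_card, ← Nat.card_eq_fintype_card,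
      Nat.card_coe_set_eq, Nat.card_coe_set_eq]
    exact h
  obtain ⟨e⟩ := Function.Embedding.nonempty_iff_card_le.mpr hc
  refine ⟨fun x => if hx : x ∈ s then (e ⟨x, hx⟩ : ℕ) else 0, ?_, ?_⟩
  · intro a ha b hb hab
    simp only [dif_pos ha, dif_pos hb] at hab
    have := e.injective (Subtype.ext hab)
    exact congrArg Subtype.val this
  · intro a ha
    simp only [dif_pos ha]
    exact (e ⟨a, ha⟩).2
/-! ### The shrinking step -/

/-- The crude pigeonhole bound. -/
noncomputable def Bnd (χ : Formula P) : ℕ :=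
  ((Cl χ).ncard + 1) * (((Cl χ).ncard + 1) *
    ((AtomSet χ).ncard * ((Cl χ).ncard + 1) ^ (AtomSet χ).ncard)) + 2

lemma shrink_step {χ : Formula P} {N : ℕ} {L : ℕ → ℕ → Set (Formula P)}
    (hC : IsFinCompass χ N L) (hbig : Bnd χ < N) :
    ∃ N' L', 1 < N' ∧ N' < N ∧ IsFinCompass χ N' L' ∧ L' 0 1 = L 0 1 := by
  classical
  unfold Bnd at hbig
  set m := (Cl χ).ncard with hmdef
  set A := (AtomSet χ).ncard with hAdef
  haveI : Fintype ↥(AtomSet χ) := (AtomSet_finite χ).1.fintype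
  have hcardAt : Fintype.card ↥(AtomSet χ) = A := by
    rw [← Nat.card_eq_fintype_card, Nat.card_coe_set_eq]
  set Tset : ℕ → Set (Formula P) :=
    fun y => {ψ | ψ ∈ Cl χ ∧ ∃ u v, u < v ∧ v < y ∧ ψ ∈ Obs χ (L u v)} with hTdef
  have tsub : ∀ y, Tset y ⊆ Cl χ := fun y ψ hψ => hψ.1
  have tfin : ∀ y, (Tset y).Finite := fun y => (Cl_finite χ).subset (tsub y)
  have tmono : ∀ {y y' : ℕ}, y ≤ y' → Tset y ⊆ Tset y' := by
    rintro y y' hle ψ ⟨h1, u, v, h2, h3, h4⟩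
    exact ⟨h1, u, v, h2, by omega, h4⟩
  have tcard : ∀ y, (Tset y).ncard ≤ m := fun y => Set.ncard_le_ncard (tsub y) (Cl_finite χ)
  set cntS : ℕ → Set (Formula P) → ℕ := fun y F => {x | x < y ∧ L x y = F}.ncard with hcntdef
  have cfin : ∀ y (F : Set (Formula P)), {x | x < y ∧ L x y = F}.Finite := fun y F =>
    (Set.finite_Iio y).subset (fun x hx => hx.1)
  have hN2 : 2 < N := by omega
  set dataFn : Fin (N - 2) →
      (Fin (m + 1) × Fin (m + 1) × ↥(AtomSet χ) × (↥(AtomSet χ) → Fin (m + 1))) :=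
    fun i => (⟨(Tset (i.val + 1)).ncard, Nat.lt_succ_of_le (tcard _)⟩,
              ⟨(Tset (i.val + 2)).ncard, Nat.lt_succ_of_le (tcard _)⟩,
              ⟨L i.val (i.val + 1), hC.isAtom i.val (i.val + 1) (Nat.lt_succ_self _)
                (by have := i.2; omega)⟩,
              fun F => ⟨min (cntS (i.val + 1) F.val) m,
                Nat.lt_succ_of_le (min_le_right _ _)⟩) with hdatadef
  set C := (m + 1) * ((m + 1) * (A * (m + 1) ^ A)) with hCdef
  have hcardD : Fintype.card
      (Fin (m + 1) × Fin (m + 1) × ↥(AtomSet χ) × (↥(AtomSet χ) → Fin (m + 1))) = C := by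
    rw [Fintype.card_prod, Fintype.card_prod, Fintype.card_prod, Fintype.card_fun,
      Fintype.card_fin, hcardAt, hCdef]
  have hlt : Fintype.card
      (Fin (m + 1) × Fin (m + 1) × ↥(AtomSet χ) × (↥(AtomSet χ) → Fin (m + 1))) <
      Fintype.card (Fin (N - 2)) := by
    rw [hcardD, Fintype.card_fin]
    omega
  obtain ⟨i, j, hij, hd⟩ := Fintype.exists_ne_map_eq_of_card_lt dataFn hlt
  have key : ∀ i j : Fin (N - 2), i.val < j.val → dataFn i = dataFn j →
      ∃ N' L', 1 < N' ∧ N' < N ∧ IsFinCompass χ N' L' ∧ L' 0 1 = L 0 1 := by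
    clear hij hd i j
    intro i j hij hd
    have hi2 := i.2
    have hj2 := j.2
    simp only [hdatadef, Prod.mk.injEq, Subtype.mk.injEq, Fin.mk.injEq] at hd
    obtain ⟨hT1, hT2, hEdge0, hcnt0⟩ := hd
    set y0 := i.val + 1 with hy0def
    set y1 := j.val + 1 with hy1def
    have hcnt : ∀ F, F ∈ AtomSet χ → min (cntS y0 F) m = min (cntS y1 F) m := by
      intro F hF
      have := congrFun hcnt0 ⟨F, hF⟩
      simpa using this
    have hEdge : L (y0 - 1) y0 = L (y1 - 1) y1 := by
      simpa [hy0def, hy1def] using congrArg Subtype.val hEdge0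
    -- the sets of observed formulas below the two rows agree
    have hTeq : Tset y0 = Tset (y1 + 1) := by
      refine Set.eq_of_subset_of_ncard_le (tmono (by omega)) ?_ (tfin (y1 + 1))
      have e1 : (Tset (y1 + 1)).ncard = (Tset (y0 + 1)).ncard := by
        rw [hy0def, hy1def]
        exact hT2.symm
      have e2 : (Tset (y0 + 1)).ncard ≤ (Tset y1).ncard :=
        Set.ncard_le_ncard (tmono (by omega)) (tfin y1)
      have e3 : (Tset y1).ncard = (Tset y0).ncard := hT1.symm
      omega
    have hT : ∀ ψ ∈ Cl χ, (∃ u v, u < v ∧ v ≤ y1 ∧ ψ ∈ Obs χ (L u v)) →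
        ∃ u v, u < v ∧ v < y0 ∧ ψ ∈ Obs χ (L u v) := by
      rintro ψ hψ ⟨u, v, h1, h2, h3⟩
      have : ψ ∈ Tset (y1 + 1) := ⟨hψ, u, v, h1, by omega, h3⟩
      rw [← hTeq] at this
      exact this.2
    -- witnesses above row y1
    set Wcl : Set (Formula P) :=
      {ψ | ψ ∈ Cl χ ∧ ∃ v, y1 < v ∧ v < N ∧ ∃ u, u < v ∧ ψ ∈ Obs χ (L u v)} with hWcldef
    have hWclfin : Wcl.Finite := (Cl_finite χ).subset (fun ψ h => h.1)
    have hwit' : ∀ ψ : Formula P, ∃ px py : ℕ, ψ ∈ Wcl →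
        (px < py ∧ y1 < py ∧ py < N ∧ ψ ∈ Obs χ (L px py) ∧
          ∀ v, y1 < v → v < N → (∃ u, u < v ∧ ψ ∈ Obs χ (L u v)) → py ≤ v) := by
      intro ψ
      by_cases hψ : ψ ∈ Wcl
      · obtain ⟨hcl, hQ⟩ := hψ
        obtain ⟨h1, h2, u0, h3, h4⟩ := Nat.find_spec hQ
        exact ⟨u0, Nat.find hQ, fun _ => ⟨h3, h1, h2, h4,
          fun v hv1 hv2 hv3 => Nat.find_min' hQ ⟨hv1, hv2, hv3⟩⟩⟩
      · exact ⟨0, 1, fun h => absurd h hψ⟩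
    choose pxf pyf hspec using hwit'
    set K : Set ℕ := {k | k < y1 ∧ ∃ ψ ∈ Wcl, pxf ψ = k} with hKdef
    have hKfin : K.Finite := (Set.finite_Iio y1).subset (fun k hk => hk.1)
    have hKcard : K.ncard ≤ m := by
      have hsub : K ⊆ pxf '' Wcl := by
        rintro k ⟨_, ψ, h1, h2⟩
        exact ⟨ψ, h1, h2⟩
      calc K.ncard ≤ (pxf '' Wcl).ncard := Set.ncard_le_ncard hsub (hWclfin.image _)
        _ ≤ Wcl.ncard := Set.ncard_image_le hWclfin
        _ ≤ m := Set.ncard_le_ncard (fun ψ h => h.1) (Cl_finite χ)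
    -- per-atom injections of witness columns into row y0
    have hemb : ∀ F : Set (Formula P), ∃ w : ℕ → ℕ,
        Set.InjOn w {k ∈ K | L k y1 = F} ∧
        Set.MapsTo w {k ∈ K | L k y1 = F} {x | x < y0 ∧ L x y0 = F} := by
      intro F
      have hsfin : ({k ∈ K | L k y1 = F}).Finite := hKfin.subset (fun k hk => hk.1)
      refine exists_injOn_nat hsfin (cfin y0 F) ?_
      rcases Set.eq_empty_or_nonempty {k ∈ K | L k y1 = F} with he | ⟨k, hkK, hkF⟩
      · rw [he]; simp
      · have hkY : k < y1 := hkK.1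
        have hFat : F ∈ AtomSet χ := by
          rw [← hkF]; exact hC.isAtom k y1 hkY (by omega)
        have hc1 : {k ∈ K | L k y1 = F}.ncard ≤ m :=
          le_trans (Set.ncard_le_ncard (fun _ h => h.1) hKfin) hKcard
        have hc2 : {k ∈ K | L k y1 = F}.ncard ≤ cntS y1 F :=
          Set.ncard_le_ncard (fun x hx => ⟨hx.1.1, hx.2⟩) (cfin y1 F)
        have hle : {k ∈ K | L k y1 = F}.ncard ≤ min (cntS y1 F) m := le_min hc2 hc1
        rw [← hcnt F hFat] at hle
        exact hle.trans (min_le_left _ _)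
    choose wF hwInj hwMap using hemb
    set w : ℕ → ℕ := fun k => wF (L k y1) k with hwdef
    have hwprop : ∀ k ∈ K, w k < y0 ∧ L (w k) y0 = L k y1 := by
      intro k hk
      exact hwMap (L k y1) ⟨hk, rfl⟩
    have hwinj : ∀ k1 ∈ K, ∀ k2 ∈ K, w k1 = w k2 → k1 = k2 := by
      intro k1 h1 k2 h2 he
      have e1 := (hwprop k1 h1).2
      have e2 := (hwprop k2 h2).2
      have hL : L k1 y1 = L k2 y1 := by rw [← e1, ← e2, he]
      refine hwInj (L k1 y1) ⟨h1, rfl⟩ ⟨h2, hL.symm⟩ ?_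
      have h2' : wF (L k1 y1) k2 = w k2 := by
        show wF (L k1 y1) k2 = wF (L k2 y1) k2
        rw [hL]
      exact he.trans h2'.symm
    -- shading inclusion of row y0 into row y1
    have hshade : ∀ x, x < y0 → ∃ x', x' < y1 ∧ L x' y1 = L x y0 := by
      intro x hx
      have hFat : L x y0 ∈ AtomSet χ := hC.isAtom x y0 hx (by omega)
      have hpos : 0 < cntS y0 (L x y0) :=
        (Set.ncard_pos (cfin y0 _)).mpr ⟨x, hx, rfl⟩
      have h1 : 0 < min (cntS y1 (L x y0)) m := by
        rw [← hcnt _ hFat]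
        have : min (cntS y0 (L x y0)) m = min (cntS y0 (L x y0)) m := rfl
        rcases Nat.le_or_ge (cntS y0 (L x y0)) m with h | h
        · omega
        · have hm1 : 1 ≤ m := by
            have hmem : χ ∈ Cl χ := subf_subset_Cl (mem_subf_self χ)
            have := (Set.ncard_pos (Cl_finite χ)).mpr ⟨χ, hmem⟩
            omega
          omega
      have h2 : 0 < cntS y1 (L x y0) := by omega
      obtain ⟨x', hx'⟩ := (Set.ncard_pos (cfin y1 _)).mp h2
      exact ⟨x', hx'.1, hx'.2⟩
    set f : ℕ → ℕ := fun x =>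
      if h : ∃ k, k ∈ K ∧ w k = x then Classical.choose h
      else if h2 : x < y0 then Classical.choose (hshade x h2) else 0 with hfdef
    have hf : ∀ x, x < y0 → f x < y1 ∧ L (f x) y1 = L x y0 := by
      intro x hx
      by_cases h : ∃ k, k ∈ K ∧ w k = x
      · have hfx : f x = Classical.choose h := by
          simp only [hfdef]; rw [dif_pos h]
        obtain ⟨hk, hwk⟩ := Classical.choose_spec h
        have hp := hwprop _ hk
        rw [hwk] at hp
        rw [hfx]
        exact ⟨hk.1, hp.2.symm⟩
      · have hfx : f x = Classical.choose (hshade x hx) := by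
          simp only [hfdef]; rw [dif_neg h, dif_pos hx]
        rw [hfx]
        exact Classical.choose_spec (hshade x hx)
    have hW : ∀ ψ, ψ ∈ Cl χ → ∀ u v, u < v → y1 < v → v < N → ψ ∈ Obs χ (L u v) →
        ∃ px py, px < py ∧ y1 < py ∧ py ≤ v ∧ py < N ∧ ψ ∈ Obs χ (L px py) ∧
          (y1 ≤ px ∨ ∃ x, x < y0 ∧ f x = px) := by
      intro ψ hψ u v huv h1v hvN hobs
      have hψW : ψ ∈ Wcl := ⟨hψ, v, h1v, hvN, u, huv, hobs⟩
      obtain ⟨hpxy, h1py, hpyN, hobsp, hmin⟩ := hspec ψ hψW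
      refine ⟨pxf ψ, pyf ψ, hpxy, h1py, hmin v h1v hvN ⟨u, huv, hobs⟩, hpyN, hobsp, ?_⟩
      rcases le_or_gt y1 (pxf ψ) with hge | hlt'
      · exact Or.inl hge
      · have hkK : pxf ψ ∈ K := ⟨hlt', ψ, hψW, rfl⟩
        have hx := hwprop _ hkK
        refine Or.inr ⟨w (pxf ψ), hx.1, ?_⟩
        have hex : ∃ k, k ∈ K ∧ w k = w (pxf ψ) := ⟨pxf ψ, hkK, rfl⟩
        have hfx : f (w (pxf ψ)) = Classical.choose hex := by
          simp only [hfdef]; rw [dif_pos hex]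
        obtain ⟨hk', hwk'⟩ := Classical.choose_spec hex
        rw [hfx]
        exact hwinj _ hk' _ hkK hwk'
    obtain ⟨L', hcomp, h01'⟩ := contraction hC (by omega) (by omega) (by omega) hEdge hT hf hW
    exact ⟨N - (y1 - y0), L', by omega, by omega, hcomp, h01'⟩
  rcases Nat.lt_trichotomy i.val j.val with h | h | h
  · exact key i j h hd
  · exact absurd (Fin.ext h) hij
  · exact key j i h hd.symm

/-- Every finite compass structure can be shrunk below the crude bound. -/
lemma small_model {χ : Formula P} :
    ∀ N : ℕ, ∀ L : ℕ → ℕ → Set (Formula P), IsFinCompass χ N L → 1 < N →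
    ∃ N' L', 1 < N' ∧ N' ≤ Bnd χ ∧ IsFinCompass χ N' L' ∧ L' 0 1 = L 0 1 := by
  intro N
  induction N using Nat.strong_induction_on with
  | _ N ih =>
    intro L hC hN
    by_cases h : N ≤ Bnd χ
    · exact ⟨N, L, hN, h, hC, rfl⟩
    · obtain ⟨N', L', h1, h2, h3, h4⟩ := shrink_step hC (by omega)
      obtain ⟨N'', L'', g1, g2, g3, g4⟩ := ih N' h2 L' h3 h1
      exact ⟨N'', L'', g1, g2, g3, g4.trans h4⟩
/-! ### The final bound -/

lemma ncard_insert_le' {α : Type} (a : α) {s : Set α} {k : ℕ} (h : s.ncard ≤ k) :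
    (insert a s).ncard ≤ k + 1 :=
  le_trans (Set.ncard_insert_le a s) (by omega)

set_option maxHeartbeats 1000000 in
lemma subf_xi_ncard_le (φ : Formula P) : (subf (xi φ)).ncard ≤ numSub φ + 6 := by
  have hincl : subf (xi φ) ⊆ insert (xi φ)
      (insert (Formula.or (Formula.or φ (Formula.diaBb φ)) (Formula.diaA φ))
      (insert (Formula.or φ (Formula.diaBb φ))
      (insert (Formula.diaBb φ)
      (insert (Formula.diaA φ)
      (insert (Formula.diaA (Formula.diaA φ)) (subf φ)))))) := by
    intro ψ hψ
    simp only [xi, subf, Set.mem_insert_iff, Set.mem_union] at hψ ⊢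
    tauto
  have hfin : (insert (xi φ)
      (insert (Formula.or (Formula.or φ (Formula.diaBb φ)) (Formula.diaA φ))
      (insert (Formula.or φ (Formula.diaBb φ))
      (insert (Formula.diaBb φ)
      (insert (Formula.diaA φ)
      (insert (Formula.diaA (Formula.diaA φ)) (subf φ))))))).Finite :=
    (((((((subf_finite φ).insert _).insert _).insert _).insert _).insert _).insert _)
  refine le_trans (Set.ncard_le_ncard hincl hfin) ?_
  exact ncard_insert_le' _ (ncard_insert_le' _ (ncard_insert_le' _ (ncard_insert_le' _
    (ncard_insert_le' _ (ncard_insert_le' _ (le_refl _))))))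

lemma Bnd_xi_le (φ : Formula P) :
    Bnd (xi φ) ≤ (8 * numSub φ + 15) ^ (2 ^ (32 * numSub φ + 56)) * 2 ^ (32 * numSub φ + 56) := by
  set n := numSub φ with hn
  have hsub : (subf (xi φ)).ncard ≤ n + 6 := subf_xi_ncard_le φ
  have hm : (Cl (xi φ)).ncard ≤ 2 * n + 12 := le_trans (Cl_ncard_le _) (by omega)
  have hgen : (genSet (xi φ)).ncard ≤ 9 * n + 54 := by
    refine le_trans (genSet_ncard_le _) ?_
    omega
  have hA : (AtomSet (xi φ)).ncard ≤ 2 ^ (9 * n + 54) :=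
    le_trans (AtomSet_finite _).2 (Nat.pow_le_pow_right (by norm_num) hgen)
  set m := (Cl (xi φ)).ncard with hmdef
  set A := (AtomSet (xi φ)).ncard with hAdef
  set a := 8 * n + 15 with hadef
  set E := 9 * n + 54 with hEdef
  set X := 2 ^ (32 * n + 56) with hXdef
  have ha1 : m + 1 ≤ a := by omega
  have hax : 1 ≤ a := by omega
  have hEX : 2 ^ E + 2 ≤ X := by
    have h2 : 2 ≤ 2 ^ E := by
      calc 2 = 2 ^ 1 := rfl
        _ ≤ 2 ^ E := Nat.pow_le_pow_right (by norm_num) (by omega)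
    have h3 : 2 ^ E + 2 ^ E = 2 ^ (E + 1) := by
      rw [pow_succ]; ring
    have h4 : (2 : ℕ) ^ (E + 1) ≤ X := by
      rw [hXdef]
      exact Nat.pow_le_pow_right (by norm_num) (by omega)
    omega
  have step1 : Bnd (xi φ) ≤ a * (a * (2 ^ E * a ^ (2 ^ E))) + 2 := by
    unfold Bnd
    rw [← hmdef, ← hAdef]
    have hpow : (m + 1) ^ A ≤ a ^ (2 ^ E) :=
      le_trans (Nat.pow_le_pow_left ha1 A) (Nat.pow_le_pow_right (by omega) hA)
    have := Nat.mul_le_mul hA hpow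
    have h5 : A * (m + 1) ^ A ≤ 2 ^ E * a ^ (2 ^ E) := this
    have h6 : (m + 1) * (A * (m + 1) ^ A) ≤ a * (2 ^ E * a ^ (2 ^ E)) :=
      Nat.mul_le_mul ha1 h5
    have h7 := Nat.mul_le_mul ha1 h6
    omega
  have step2 : a * (a * (2 ^ E * a ^ (2 ^ E))) = 2 ^ E * a ^ (2 ^ E + 2) := by
    rw [pow_add]
    ring
  have step3 : a ^ (2 ^ E + 2) ≤ a ^ X := Nat.pow_le_pow_right hax hEX
  have haX1 : 1 ≤ a ^ X := Nat.one_le_pow _ _ (by omega)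
  calc Bnd (xi φ) ≤ a * (a * (2 ^ E * a ^ (2 ^ E))) + 2 := step1
    _ = 2 ^ E * a ^ (2 ^ E + 2) + 2 := by rw [step2]
    _ ≤ 2 ^ E * a ^ X + 2 * a ^ X := by
        have := Nat.mul_le_mul_left (2 ^ E) step3
        omega
    _ = a ^ X * (2 ^ E + 2) := by ring
    _ ≤ a ^ X * X := Nat.mul_le_mul_left _ hEX

theorem finite_small_model' {P : Type} (φ : Formula P) :
    (∃ (O : Type) (_ : LinearOrder O) (_ : Finite O)
       (σ : Interval O → Set P) (I : Interval O), sat σ φ I) ↔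
    (∃ (N : ℕ) (L : ℕ → ℕ → Set (Formula P)),
       1 < N ∧
       N ≤ (8 * numSub φ + 15) ^ (2 ^ (32 * numSub φ + 56)) * 2 ^ (32 * numSub φ + 56) ∧
       IsFinCompass (xi φ) N L ∧ xi φ ∈ L 0 1) := by
  constructor
  · intro h
    obtain ⟨N0, L0, hN0, hC0, hξ0⟩ := forward_base h
    obtain ⟨N, L, h1, h2, h3, h4⟩ := small_model N0 L0 hC0 hN0
    refine ⟨N, L, h1, le_trans h2 (Bnd_xi_le φ), h3, ?_⟩
    rw [h4]
    exact hξ0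
  · rintro ⟨N, L, h1, _, h3, h4⟩
    exact backward_dir h1 h3 h4

/-- An ABB̄L̄-formula `φ` is satisfied by some finite interval
structure iff `ξ = φ ∨ ⟨B̄⟩φ ∨ ⟨A⟩φ ∨ ⟨A⟩⟨A⟩φ` is featured at the initial point
`(0,1)` of some finite compass `ξ`-structure of size at most double exponential
in `|φ|`. -/
theorem finite_small_model {P : Type} (φ : Formula P) :
    (∃ (O : Type) (_ : LinearOrder O) (_ : Finite O)
       (σ : Interval O → Set P) (I : Interval O), sat σ φ I) ↔
    (∃ (N : ℕ) (L : ℕ → ℕ → Set (Formula P)),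
       1 < N ∧
       N ≤ (8 * numSub φ + 15) ^ (2 ^ (32 * numSub φ + 56)) * 2 ^ (32 * numSub φ + 56) ∧
       IsFinCompass (xi φ) N L ∧ xi φ ∈ L 0 1) := by
  exact finite_small_model' φ

end ABBL
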